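/- arXiv:1204.5458 — 6 statements merged into one kernel-verified Lean document; each statement's English description precedes it below -/
import Mathlib

section
/- Let ν > 0. For φ ∈ H_{ν,0}(ℝ), define (Jφ)(x) = ∫_{-∞}^x φ(t) dt. Then J is a well-defined bounded linear operator on H_{ν,0}(ℝ) with operator norm exactly 1/ν. -/
open MeasureTheory Complex Set Filter
open scoped ENNReal NNReal

/-- The exponentially weighted measure `e^{-2νx} dx` on `ℝ`;
`Lp ℂ 2 (wMeasure ν)` is the space `H_{ν,0}(ℝ)`. -/
noncomputable def wMeasure (ν : ℝ) : Measure ℝ :=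
  (volume : Measure ℝ).withDensity fun x => ENNReal.ofReal (Real.exp (-2 * ν * x))


namespace JAux

lemma ofReal_norm_eq_coe_nnnorm {E : Type*} [NormedAddCommGroup E] (x : E) :
    ENNReal.ofReal ‖x‖ = (‖x‖₊ : ℝ≥0∞) := ENNReal.ofReal_eq_coe_nnreal (norm_nonneg x)

lemma intervalIntegral_exp_mul {b : ℝ} (hb : b ≠ 0) (y c : ℝ) :
    ∫ t in y..c, Real.exp (b * t) = Real.exp (b * c) / b - Real.exp (b * y) / b := by
  have D : ∀ x ∈ Set.uIcc y c, HasDerivAt (fun t => Real.exp (b * t) / b)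
      (Real.exp (b * x)) x := by
    intro x _
    have h1 : HasDerivAt (fun t : ℝ => b * t) b x := by
      simpa using (hasDerivAt_id x).const_mul b
    have h2 := (Real.hasDerivAt_exp (b * x)).comp x h1
    simpa [mul_comm, mul_div_assoc, mul_div_cancel_left₀ _ hb] using h2.div_const b
  have hc : Continuous fun t : ℝ => Real.exp (b * t) :=
    Real.continuous_exp.comp (continuous_const.mul continuous_id)
  rw [intervalIntegral.integral_eq_sub_of_hasDerivAt D (hc.intervalIntegrable _ _)]

lemma integrableOn_exp_mul_Iic {b : ℝ} (hb : 0 < b) (c : ℝ) :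
    IntegrableOn (fun t => Real.exp (b * t)) (Set.Iic c) := by
  refine integrableOn_Iic_of_intervalIntegral_norm_bounded (Real.exp (b * c) / b) c
    (fun y => ((Real.continuous_exp.comp (continuous_const.mul continuous_id)).integrableOn_Ioc))
    tendsto_id (Filter.Eventually.of_forall fun y => ?_)
  simp only [Real.norm_eq_abs, abs_of_pos (Real.exp_pos _), id]
  rw [intervalIntegral_exp_mul hb.ne']
  nlinarith [(Real.exp_pos (b * y)).le, div_nonneg (Real.exp_pos (b * y)).le hb.le]

lemma integral_exp_mul_Iic {b : ℝ} (hb : 0 < b) (c : ℝ) :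
    ∫ t in Set.Iic c, Real.exp (b * t) = Real.exp (b * c) / b := by
  refine tendsto_nhds_unique
    (intervalIntegral_tendsto_integral_Iic _ (integrableOn_exp_mul_Iic hb c) tendsto_id) ?_
  simp_rw [intervalIntegral_exp_mul hb.ne']
  have : Filter.Tendsto (fun y : ℝ => Real.exp (b * y) / b) Filter.atBot (nhds 0) := by
    have h1 : Filter.Tendsto (fun y : ℝ => b * y) Filter.atBot Filter.atBot :=
      (tendsto_const_mul_atBot_of_pos hb).mpr Filter.tendsto_id
    simpa using (Real.tendsto_exp_atBot.comp h1).div_const b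
  simpa using (tendsto_const_nhds.sub this)

lemma integrableOn_exp_neg_mul_Ici {b : ℝ} (hb : 0 < b) (c : ℝ) :
    IntegrableOn (fun t => Real.exp (-b * t)) (Set.Ici c) :=
  (integrableOn_Ici_iff_integrableOn_Ioi).mpr (exp_neg_integrableOn_Ioi c hb)

lemma integral_exp_neg_mul_Ici {b : ℝ} (hb : 0 < b) (c : ℝ) :
    ∫ t in Set.Ici c, Real.exp (-b * t) = Real.exp (-b * c) / b := by
  rw [integral_Ici_eq_integral_Ioi]
  refine tendsto_nhds_unique
    (intervalIntegral_tendsto_integral_Ioi _ (exp_neg_integrableOn_Ioi c hb) tendsto_id) ?_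
  have hb' : (-b : ℝ) ≠ 0 := by linarith
  simp_rw [intervalIntegral_exp_mul hb', id]
  have h0 : Filter.Tendsto (fun y : ℝ => Real.exp (-b * y) / b) Filter.atTop (nhds 0) := by
    have h1 : Filter.Tendsto (fun y : ℝ => -b * y) Filter.atTop Filter.atBot := by
      have h2 := (tendsto_const_mul_atTop_of_pos hb).mpr (Filter.tendsto_id (α := ℝ))
      exact (tendsto_neg_atTop_atBot.comp h2).congr (fun y => by simp [neg_mul])
    simpa using (Real.tendsto_exp_atBot.comp h1).div_const b
  have h3 := (tendsto_const_nhds (x := Real.exp (-b * c) / b)).sub h0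
  rw [sub_zero] at h3
  refine Filter.Tendsto.congr (fun y => ?_) h3
  field_simp
  ring

noncomputable section

/-- weighted square integral -/
def nsq (ν : ℝ) (f : ℝ → ℂ) : ℝ≥0∞ :=
  ∫⁻ t, (‖f t‖₊ : ℝ≥0∞) ^ (2:ℝ) * ENNReal.ofReal (Real.exp (-2 * ν * t))

lemma w_measurable (ν : ℝ) : Measurable fun x : ℝ => ENNReal.ofReal (Real.exp (-2 * ν * x)) :=
  (Real.measurable_exp.comp (measurable_const.mul measurable_id)).ennreal_ofReal

lemma volume_ac (ν : ℝ) : (volume : Measure ℝ) ≪ wMeasure ν :=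
  withDensity_absolutelyContinuous' (w_measurable ν).aemeasurable
    (Filter.Eventually.of_forall fun x => (ENNReal.ofReal_pos.mpr (Real.exp_pos _)).ne')

lemma wMeasure_ac (ν : ℝ) : wMeasure ν ≪ (volume : Measure ℝ) :=
  withDensity_absolutelyContinuous _ _

lemma lintegral_wMeasure (ν : ℝ) {g : ℝ → ℝ≥0∞} (hg : AEMeasurable g (wMeasure ν)) :
    ∫⁻ x, g x ∂(wMeasure ν) = ∫⁻ x, g x * ENNReal.ofReal (Real.exp (-2 * ν * x)) := by
  rw [wMeasure, lintegral_withDensity_eq_lintegral_mul₀' (w_measurable ν).aemeasurable hg]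
  exact lintegral_congr fun x => mul_comm _ _

lemma eLpNorm_wMeasure (ν : ℝ) {f : ℝ → ℂ} (hf : AEStronglyMeasurable f (wMeasure ν)) :
    eLpNorm f 2 (wMeasure ν) = (nsq ν f) ^ (1/2 : ℝ) := by
  rw [eLpNorm_eq_lintegral_rpow_enorm_toReal (by norm_num) (by norm_num)]
  have h2 : ((2:ℝ≥0∞)).toReal = (2:ℝ) := by norm_num
  rw [h2, nsq, ← lintegral_wMeasure ν]
  · rfl
  exact (hf.enorm.pow_const _)

end

section nu

variable {ν : ℝ}

lemma ofReal_exp_sq (r : ℝ) :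
    ENNReal.ofReal (Real.exp r) ^ (2:ℝ) = ENNReal.ofReal (Real.exp (2 * r)) := by
  rw [ENNReal.rpow_two, sq, ← ENNReal.ofReal_mul (Real.exp_nonneg _), ← Real.exp_add]
  ring_nf

lemma sq_half (a : ℝ≥0∞) : (a ^ (1/2:ℝ)) ^ (2:ℝ) = a := by
  rw [← ENNReal.rpow_mul]; norm_num

/-- the key Cauchy-Schwarz estimate -/
lemma key_CS (hν : 0 < ν) {f : ℝ → ℂ} (hf : AEMeasurable f volume) (x : ℝ) :
    ∫⁻ t in Set.Iic x, (‖f t‖₊ : ℝ≥0∞)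
      ≤ (∫⁻ t in Set.Iic x,
            (‖f t‖₊ : ℝ≥0∞) ^ (2:ℝ) * ENNReal.ofReal (Real.exp (-ν * t))) ^ (1/2 : ℝ)
        * ENNReal.ofReal (Real.exp (ν * x) / ν) ^ (1/2 : ℝ) := by
  set F : ℝ → ℝ≥0∞ := fun t => (‖f t‖₊ : ℝ≥0∞) * ENNReal.ofReal (Real.exp (-ν * t / 2))
  set G : ℝ → ℝ≥0∞ := fun t => ENNReal.ofReal (Real.exp (ν * t / 2))
  have hpq : Real.HolderConjugate 2 2 := Real.HolderConjugate.two_two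
  have hF : AEMeasurable F (volume.restrict (Set.Iic x)) :=
    (hf.enorm.mul ((Real.measurable_exp.comp ((measurable_const.mul measurable_id).div_const
      2)).ennreal_ofReal).aemeasurable).restrict
  have hG : AEMeasurable G (volume.restrict (Set.Iic x)) :=
    (((Real.measurable_exp.comp ((measurable_const.mul measurable_id).div_const
      2)).ennreal_ofReal).aemeasurable).restrict
  have hFG : ∀ t, (F * G) t = (‖f t‖₊ : ℝ≥0∞) := by
    intro t
    simp only [F, G, Pi.mul_apply, mul_assoc, ← ENNReal.ofReal_mul (Real.exp_nonneg _),
      ← Real.exp_add]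
    rw [show -ν * t / 2 + ν * t / 2 = (0:ℝ) by ring, Real.exp_zero, ENNReal.ofReal_one, mul_one]
  have h := ENNReal.lintegral_mul_le_Lp_mul_Lq (volume.restrict (Set.Iic x)) hpq hF hG
  simp only [hFG] at h
  refine h.trans (le_of_eq ?_)
  have hFsq : ∀ t, F t ^ (2:ℝ)
      = (‖f t‖₊ : ℝ≥0∞) ^ (2:ℝ) * ENNReal.ofReal (Real.exp (-ν * t)) := by
    intro t
    rw [ENNReal.mul_rpow_of_nonneg _ _ (by norm_num : (0:ℝ) ≤ 2), ofReal_exp_sq,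
      show 2 * (-ν * t / 2) = -ν * t by ring]
  have hGsq : ∀ t, G t ^ (2:ℝ) = ENNReal.ofReal (Real.exp (ν * t)) := by
    intro t
    rw [ofReal_exp_sq, show 2 * (ν * t / 2) = ν * t by ring]
  congr 1
  · exact congrArg (· ^ (1/2:ℝ)) (lintegral_congr hFsq)
  · rw [lintegral_congr hGsq,
      ← ofReal_integral_eq_lintegral_ofReal (integrableOn_exp_mul_Iic hν x)
        (Filter.Eventually.of_forall fun t => (Real.exp_pos _).le),
      integral_exp_mul_Iic hν]

lemma B_le (hν : 0 < ν) (f : ℝ → ℂ) (x : ℝ) :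
    ∫⁻ t in Set.Iic x, (‖f t‖₊ : ℝ≥0∞) ^ (2:ℝ) * ENNReal.ofReal (Real.exp (-ν * t))
      ≤ ENNReal.ofReal (Real.exp (ν * x)) * nsq ν f := by
  calc ∫⁻ t in Set.Iic x, (‖f t‖₊ : ℝ≥0∞) ^ (2:ℝ) * ENNReal.ofReal (Real.exp (-ν * t))
      ≤ ∫⁻ t in Set.Iic x, ENNReal.ofReal (Real.exp (ν * x)) *
          ((‖f t‖₊ : ℝ≥0∞) ^ (2:ℝ) * ENNReal.ofReal (Real.exp (-2 * ν * t))) := by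
        refine setLIntegral_mono' measurableSet_Iic fun t ht => ?_
        rw [show ENNReal.ofReal (Real.exp (ν * x)) *
            ((‖f t‖₊ : ℝ≥0∞) ^ (2:ℝ) * ENNReal.ofReal (Real.exp (-2 * ν * t)))
            = (‖f t‖₊ : ℝ≥0∞) ^ (2:ℝ) *
              (ENNReal.ofReal (Real.exp (ν * x)) * ENNReal.ofReal (Real.exp (-2 * ν * t)))
            by ring, ← ENNReal.ofReal_mul (Real.exp_nonneg _), ← Real.exp_add]
        refine mul_le_mul_right (ENNReal.ofReal_le_ofReal (Real.exp_le_exp.mpr ?_)) _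
        have := mul_le_mul_of_nonneg_left ht hν.le
        nlinarith
    _ ≤ ENNReal.ofReal (Real.exp (ν * x)) * nsq ν f := by
        rw [lintegral_const_mul' _ _ ENNReal.ofReal_ne_top]
        exact mul_le_mul_right (setLIntegral_le_lintegral _ _) _

lemma A_lt_top (hν : 0 < ν) {f : ℝ → ℂ} (hf : AEMeasurable f volume)
    (hfin : nsq ν f ≠ ∞) (x : ℝ) :
    ∫⁻ t in Set.Iic x, (‖f t‖₊ : ℝ≥0∞) < ∞ := by
  refine lt_of_le_of_lt ((key_CS hν hf x).trans
    (mul_le_mul_left (ENNReal.rpow_le_rpow (B_le hν f x) (by norm_num)) _)) ?_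
  refine ENNReal.mul_lt_top ?_ ?_
  · exact ENNReal.rpow_lt_top_of_nonneg (by norm_num)
      (ENNReal.mul_ne_top ENNReal.ofReal_ne_top hfin)
  · exact ENNReal.rpow_lt_top_of_nonneg (by norm_num) ENNReal.ofReal_ne_top

lemma integrableOn_Iic_of_nsq (hν : 0 < ν) {f : ℝ → ℂ}
    (hf : AEStronglyMeasurable f volume) (hfin : nsq ν f ≠ ∞) (x : ℝ) :
    IntegrableOn f (Set.Iic x) :=
  ⟨hf.restrict, A_lt_top hν hf.aemeasurable hfin x⟩

lemma g_ne_top {f : ℝ → ℂ} (t : ℝ) :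
    (‖f t‖₊ : ℝ≥0∞) ^ (2:ℝ) * ENNReal.ofReal (Real.exp (-ν * t)) ≠ ∞ :=
  ENNReal.mul_ne_top (ENNReal.rpow_ne_top_of_nonneg (by norm_num) ENNReal.coe_ne_top)
    ENNReal.ofReal_ne_top

/-- the main norm estimate -/
lemma nsq_J_le (hν : 0 < ν) {f : ℝ → ℂ} (hf : Measurable f) (hfin : nsq ν f ≠ ∞) :
    nsq ν (fun x => ∫ t in Set.Iic x, f t) ≤ ENNReal.ofReal (1/(ν*ν)) * nsq ν f := by
  set g : ℝ → ℝ≥0∞ :=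
    fun t => (‖f t‖₊ : ℝ≥0∞) ^ (2:ℝ) * ENNReal.ofReal (Real.exp (-ν * t)) with hg_def
  have hg : Measurable g :=
    (hf.enorm.pow_const _).mul
      ((Real.measurable_exp.comp (measurable_const.mul measurable_id)).ennreal_ofReal)
  set c : ℝ → ℝ≥0∞ := fun x => ENNReal.ofReal (Real.exp (-ν * x) / ν) with hc_def
  have hc : Measurable c :=
    ((Real.measurable_exp.comp (measurable_const.mul measurable_id)).div_const ν).ennreal_ofReal
  have step1 : nsq ν (fun x => ∫ t in Set.Iic x, f t)
      ≤ ∫⁻ x, (∫⁻ t in Set.Iic x, g t) * c x := by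
    refine lintegral_mono fun x => ?_
    have h1 : (‖∫ t in Set.Iic x, f t‖₊ : ℝ≥0∞) ^ (2:ℝ)
        ≤ ((∫⁻ t in Set.Iic x, g t) ^ (1/2:ℝ)
            * ENNReal.ofReal (Real.exp (ν * x) / ν) ^ (1/2:ℝ)) ^ (2:ℝ) := by
      refine ENNReal.rpow_le_rpow ?_ (by norm_num)
      exact (enorm_integral_le_lintegral_enorm _).trans (key_CS hν hf.aemeasurable x)
    rw [ENNReal.mul_rpow_of_nonneg _ _ (by norm_num : (0:ℝ) ≤ 2), sq_half, sq_half] at h1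
    refine (mul_le_mul_left h1 _).trans (le_of_eq ?_)
    rw [mul_assoc, ← ENNReal.ofReal_mul (by positivity), hc_def]
    congr 2
    rw [div_mul_eq_mul_div, ← Real.exp_add]
    ring_nf
  have step2 : ∫⁻ x, (∫⁻ t in Set.Iic x, g t) * c x
      = ∫⁻ t, g t * (ENNReal.ofReal (Real.exp (-ν * t) / ν / ν)) := by
    have e1 : ∀ x, (∫⁻ t in Set.Iic x, g t) * c x
        = ∫⁻ t, {p : ℝ × ℝ | p.2 ≤ p.1}.indicator (fun p => g p.2 * c p.1) (x, t) := by
      intro x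
      rw [← lintegral_indicator measurableSet_Iic, ← lintegral_mul_const' _ _
        ENNReal.ofReal_ne_top]
      refine lintegral_congr fun t => ?_
      by_cases h : t ≤ x <;> simp [Set.indicator_apply, h, c, g, neg_mul]
    have hmeas : Measurable fun p : ℝ × ℝ =>
        {p : ℝ × ℝ | p.2 ≤ p.1}.indicator (fun p => g p.2 * c p.1) p :=
      ((hg.comp measurable_snd).mul (hc.comp measurable_fst)).indicator
        (measurableSet_le measurable_snd measurable_fst)
    rw [lintegral_congr e1, lintegral_lintegral_swap hmeas.aemeasurable]
    refine lintegral_congr fun t => ?_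
    have e2 : ∀ x, {p : ℝ × ℝ | p.2 ≤ p.1}.indicator (fun p => g p.2 * c p.1) (x, t)
        = (Set.Ici t).indicator (fun x => g t * c x) x := by
      intro x
      by_cases h : t ≤ x <;> simp [Set.indicator_apply, h, c, g, neg_mul]
    rw [lintegral_congr e2, lintegral_indicator measurableSet_Ici,
      lintegral_const_mul' _ _ (g_ne_top t)]
    congr 1
    rw [← ofReal_integral_eq_lintegral_ofReal ((integrableOn_exp_neg_mul_Ici hν t).div_const ν)
      (Filter.Eventually.of_forall fun y => by positivity), integral_div,
      integral_exp_neg_mul_Ici hν]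
  have step3 : ∫⁻ t, g t * (ENNReal.ofReal (Real.exp (-ν * t) / ν / ν))
      = ENNReal.ofReal (1/(ν*ν)) * nsq ν f := by
    rw [nsq, ← lintegral_const_mul' _ _ ENNReal.ofReal_ne_top]
    refine lintegral_congr fun t => ?_
    rw [hg_def, mul_assoc, ← ENNReal.ofReal_mul (Real.exp_nonneg _),
      show ENNReal.ofReal (1/(ν*ν)) * ((‖f t‖₊ : ℝ≥0∞) ^ (2:ℝ)
          * ENNReal.ofReal (Real.exp (-2 * ν * t)))
        = (‖f t‖₊ : ℝ≥0∞) ^ (2:ℝ)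
          * (ENNReal.ofReal (1/(ν*ν)) * ENNReal.ofReal (Real.exp (-2 * ν * t))) by ring,
      ← ENNReal.ofReal_mul (by positivity)]
    congr 2
    rw [show Real.exp (-ν * t) * (Real.exp (-ν * t) / ν / ν)
        = (Real.exp (-ν * t) * Real.exp (-ν * t)) / (ν * ν) by ring, ← Real.exp_add]
    rw [show -ν * t + -ν * t = -2 * ν * t by ring]
    ring
  exact step1.trans (le_of_eq (step2.trans step3))


lemma continuous_J (hν : 0 < ν) {f : ℝ → ℂ} (hf : AEStronglyMeasurable f volume)
    (hfin : nsq ν f ≠ ∞) :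
    Continuous fun x => ∫ t in Set.Iic x, f t := by
  have hInt := integrableOn_Iic_of_nsq hν hf hfin
  have h2 : ∀ a b : ℝ, IntervalIntegrable f volume a b := fun a b =>
    intervalIntegrable_iff.mpr ((hInt (max a b)).mono_set
      (by rw [Set.uIoc]; exact Set.Ioc_subset_Iic_self))
  have key : ∀ x : ℝ, ∫ t in Set.Iic x, f t
      = (∫ t in Set.Iic (0:ℝ), f t) + ∫ t in (0:ℝ)..x, f t := by
    intro x
    rw [← intervalIntegral.integral_Iic_sub_Iic (hInt 0) (hInt x)]
    ring
  rw [show (fun x => ∫ t in Set.Iic x, f t)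
      = fun x => (∫ t in Set.Iic (0:ℝ), f t) + ∫ t in (0:ℝ)..x, f t from funext key]
  exact continuous_const.add (intervalIntegral.continuous_primitive h2 0)

lemma nsq_ne_top (f : Lp ℂ 2 (wMeasure ν)) : nsq ν ⇑f ≠ ∞ := by
  have h := Lp.eLpNorm_lt_top f
  rw [eLpNorm_wMeasure ν (Lp.aestronglyMeasurable f)] at h
  intro hc
  rw [hc, ENNReal.top_rpow_of_pos (by norm_num)] at h
  exact (lt_irrefl _ h).elim

lemma nsq_vol_aesm (f : Lp ℂ 2 (wMeasure ν)) : AEStronglyMeasurable (⇑f) volume :=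
  (Lp.stronglyMeasurable f).aestronglyMeasurable

lemma memJ (hν : 0 < ν) (f : Lp ℂ 2 (wMeasure ν)) :
    MemLp (fun x => ∫ t in Set.Iic x, ⇑f t) 2 (wMeasure ν) := by
  refine ⟨(continuous_J hν (nsq_vol_aesm f) (nsq_ne_top f)).aestronglyMeasurable, ?_⟩
  rw [eLpNorm_wMeasure ν (continuous_J hν (nsq_vol_aesm f) (nsq_ne_top f)).aestronglyMeasurable]
  refine ENNReal.rpow_lt_top_of_nonneg (by norm_num) ?_
  exact ne_top_of_le_ne_top
    (ENNReal.mul_ne_top ENNReal.ofReal_ne_top (nsq_ne_top f))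
    (nsq_J_le hν (Lp.stronglyMeasurable f).measurable (nsq_ne_top f))

lemma ofReal_inv_sq_rpow (hν : 0 < ν) :
    (ENNReal.ofReal (1/(ν*ν))) ^ (1/2:ℝ) = ENNReal.ofReal (1/ν) := by
  rw [ENNReal.ofReal_rpow_of_pos (by positivity)]
  congr 1
  rw [show (1/(ν*ν) : ℝ) = (1/ν)^(2:ℝ) by rw [Real.rpow_two, pow_two]; ring,
    ← Real.rpow_mul (by positivity)]
  norm_num

lemma eLpNorm_J_le (hν : 0 < ν) (f : Lp ℂ 2 (wMeasure ν)) :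
    eLpNorm (fun x => ∫ t in Set.Iic x, ⇑f t) 2 (wMeasure ν)
      ≤ ENNReal.ofReal (1/ν) * eLpNorm ⇑f 2 (wMeasure ν) := by
  rw [eLpNorm_wMeasure ν (continuous_J hν (nsq_vol_aesm f) (nsq_ne_top f)).aestronglyMeasurable,
    eLpNorm_wMeasure ν (Lp.aestronglyMeasurable f)]
  calc (nsq ν fun x => ∫ t in Set.Iic x, ⇑f t) ^ (1/2:ℝ)
      ≤ (ENNReal.ofReal (1/(ν*ν)) * nsq ν ⇑f) ^ (1/2:ℝ) :=
        ENNReal.rpow_le_rpow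
          (nsq_J_le hν (Lp.stronglyMeasurable f).measurable (nsq_ne_top f)) (by norm_num)
    _ = ENNReal.ofReal (1/ν) * (nsq ν ⇑f) ^ (1/2:ℝ) := by
        rw [ENNReal.mul_rpow_of_nonneg _ _ (by norm_num : (0:ℝ) ≤ 1/2), ofReal_inv_sq_rpow hν]

lemma norm_toLp_J_le (hν : 0 < ν) (f : Lp ℂ 2 (wMeasure ν)) :
    ‖(memJ hν f).toLp _‖ ≤ (1/ν) * ‖f‖ := by
  rw [Lp.norm_toLp _ (memJ hν f), Lp.norm_def]
  calc (eLpNorm (fun x => ∫ t in Set.Iic x, ⇑f t) 2 (wMeasure ν)).toReal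
      ≤ (ENNReal.ofReal (1/ν) * eLpNorm ⇑f 2 (wMeasure ν)).toReal :=
        ENNReal.toReal_mono
          (ENNReal.mul_ne_top ENNReal.ofReal_ne_top (Lp.eLpNorm_ne_top f)) (eLpNorm_J_le hν f)
    _ = (1/ν) * (eLpNorm ⇑f 2 (wMeasure ν)).toReal := by
        rw [ENNReal.toReal_mul, ENNReal.toReal_ofReal (by positivity)]



/-! ### test functions for the lower bound -/

noncomputable def ga (a : ℝ) : ℝ → ℂ :=
  (Set.Iic (0:ℝ)).indicator fun t => (Real.exp (a * t) : ℂ)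

lemma ga_stronglyMeasurable (a : ℝ) : StronglyMeasurable (ga a) :=
  ((Complex.continuous_ofReal.comp
    (Real.continuous_exp.comp (continuous_const.mul continuous_id))).stronglyMeasurable).indicator
      measurableSet_Iic

lemma nsq_ga (hν : 0 < ν) {a : ℝ} (ha : ν < a) :
    nsq ν (ga a) = ENNReal.ofReal (1 / (2 * (a - ν))) := by
  have h2 : (0:ℝ) < 2 * a - 2 * ν := by linarith
  have hpt : ∀ t, (‖ga a t‖₊ : ℝ≥0∞) ^ (2:ℝ) * ENNReal.ofReal (Real.exp (-2 * ν * t))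
      = (Set.Iic (0:ℝ)).indicator
          (fun t => ENNReal.ofReal (Real.exp ((2 * a - 2 * ν) * t))) t := by
    intro t
    by_cases h : t ≤ 0
    · simp only [ga, Set.indicator_of_mem (Set.mem_Iic.mpr h)]
      rw [← ofReal_norm_eq_coe_nnnorm, Complex.norm_real, Real.norm_eq_abs,
        abs_of_pos (Real.exp_pos _), ofReal_exp_sq, ← ENNReal.ofReal_mul (Real.exp_nonneg _),
        ← Real.exp_add, show 2 * (a * t) + -2 * ν * t = (2 * a - 2 * ν) * t by ring]
    · simp only [ga, Set.indicator_of_notMem (fun hc => h (Set.mem_Iic.mp hc))]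
      rw [nnnorm_zero, ENNReal.coe_zero, ENNReal.zero_rpow_of_pos (by norm_num), zero_mul]
  rw [nsq, lintegral_congr hpt, lintegral_indicator measurableSet_Iic,
    ← ofReal_integral_eq_lintegral_ofReal (integrableOn_exp_mul_Iic h2 0)
      (Filter.Eventually.of_forall fun t => (Real.exp_pos _).le),
    integral_exp_mul_Iic h2]
  rw [mul_zero, Real.exp_zero, show 2 * a - 2 * ν = 2 * (a - ν) by ring]

lemma memℒp_ga (hν : 0 < ν) {a : ℝ} (ha : ν < a) : MemLp (ga a) 2 (wMeasure ν) := by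
  refine ⟨(ga_stronglyMeasurable a).aestronglyMeasurable, ?_⟩
  rw [eLpNorm_wMeasure ν (ga_stronglyMeasurable a).aestronglyMeasurable, nsq_ga hν ha]
  exact ENNReal.rpow_lt_top_of_nonneg (by norm_num) ENNReal.ofReal_ne_top

lemma J_ga_eval (hν : 0 < ν) {a : ℝ} (ha : ν < a) {x : ℝ} (hx : x ≤ 0) :
    ∫ t in Set.Iic x, ga a t = ((Real.exp (a * x) / a : ℝ) : ℂ) := by
  have ha0 : (0:ℝ) < a := hν.trans ha
  have h1 : ∫ t in Set.Iic x, ga a t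
      = ∫ t in Set.Iic x, ((Real.exp (a * t) : ℝ) : ℂ) := by
    refine setIntegral_congr_fun measurableSet_Iic fun t ht => ?_
    exact Set.indicator_of_mem (Set.mem_Iic.mpr ((Set.mem_Iic.mp ht).trans hx)) _
  rw [h1, show (∫ t in Set.Iic x, ((Real.exp (a * t) : ℝ) : ℂ))
      = ((∫ t in Set.Iic x, Real.exp (a * t) : ℝ) : ℂ) from integral_ofReal,
    integral_exp_mul_Iic ha0]

lemma nsq_J_ga_ge (hν : 0 < ν) {a : ℝ} (ha : ν < a) :
    ENNReal.ofReal ((1 / (2 * (a - ν))) / (a * a))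
      ≤ nsq ν (fun x => ∫ t in Set.Iic x, ga a t) := by
  have ha0 : (0:ℝ) < a := hν.trans ha
  have h2 : (0:ℝ) < 2 * a - 2 * ν := by linarith
  have hres : ∫⁻ x in Set.Iic (0:ℝ), (‖∫ t in Set.Iic x, ga a t‖₊ : ℝ≥0∞) ^ (2:ℝ)
        * ENNReal.ofReal (Real.exp (-2 * ν * x))
      = ENNReal.ofReal ((1 / (2 * (a - ν))) / (a * a)) := by
    have hpt : ∀ x ∈ Set.Iic (0:ℝ), (‖∫ t in Set.Iic x, ga a t‖₊ : ℝ≥0∞) ^ (2:ℝ)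
          * ENNReal.ofReal (Real.exp (-2 * ν * x))
        = ENNReal.ofReal (Real.exp ((2 * a - 2 * ν) * x) / (a * a)) := by
      intro x hx
      rw [J_ga_eval hν ha (Set.mem_Iic.mp hx), ← ofReal_norm_eq_coe_nnnorm,
        Complex.norm_real, Real.norm_eq_abs, abs_of_pos (by positivity),
        ENNReal.ofReal_rpow_of_pos (by positivity),
        ← ENNReal.ofReal_mul (by positivity), Real.rpow_two, pow_two]
      congr 1
      rw [div_mul_div_comm, ← Real.exp_add, div_mul_eq_mul_div, ← Real.exp_add,
        show a * x + a * x + -2 * ν * x = (2 * a - 2 * ν) * x by ring]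
    rw [setLIntegral_congr_fun measurableSet_Iic hpt,
      ← ofReal_integral_eq_lintegral_ofReal
        ((integrableOn_exp_mul_Iic h2 0).div_const (a * a))
        (Filter.Eventually.of_forall fun t => by positivity),
      integral_div, integral_exp_mul_Iic h2]
    rw [mul_zero, Real.exp_zero, show 2 * a - 2 * ν = 2 * (a - ν) by ring]
  rw [← hres]
  exact setLIntegral_le_lintegral _ _


end nu

end JAux

/-- For `ν > 0`, the map `(Jφ)(x) = ∫_{-∞}^x φ(t) dt` is a well-defined bounded linear
operator on `H_{ν,0}(ℝ)` with operator norm exactly `1/ν`. -/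
theorem integration_operator_bounded_norm (ν : ℝ) (hν : 0 < ν) :
    ∃ J : Lp ℂ 2 (wMeasure ν) →L[ℂ] Lp ℂ 2 (wMeasure ν),
      (∀ f : Lp ℂ 2 (wMeasure ν),
        (J f : ℝ → ℂ) =ᵐ[volume] fun x => ∫ t in Set.Iic x, (f : ℝ → ℂ) t) ∧
      ‖J‖ = 1 / ν := by
  classical
  have hint : ∀ (f : Lp ℂ 2 (wMeasure ν)) (x : ℝ),
      MeasureTheory.IntegrableOn (⇑f) (Set.Iic x) volume :=
    fun f x => JAux.integrableOn_Iic_of_nsq hν (JAux.nsq_vol_aesm f) (JAux.nsq_ne_top f) x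
  set L : Lp ℂ 2 (wMeasure ν) →ₗ[ℂ] Lp ℂ 2 (wMeasure ν) :=
    { toFun := fun f => (JAux.memJ hν f).toLp _
      map_add' := by
        intro f g
        have hae : ⇑(f + g) =ᵐ[volume] ⇑f + ⇑g :=
          (Lp.coeFn_add f g).filter_mono (JAux.volume_ac ν).ae_le
        have h1 : (fun x => ∫ t in Set.Iic x, (⇑(f + g)) t)
            = (fun x => ∫ t in Set.Iic x, ⇑f t) + (fun x => ∫ t in Set.Iic x, ⇑g t) := by
          funext x
          have h2 := integral_congr_ae (ae_restrict_of_ae hae (s := Set.Iic x))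
          simp only [Pi.add_apply] at h2 ⊢
          rw [h2, integral_add (hint f x) (hint g x)]
        rw [MemLp.toLp_congr (JAux.memJ hν (f + g)) ((JAux.memJ hν f).add (JAux.memJ hν g))
          (Filter.EventuallyEq.of_eq h1), MemLp.toLp_add]
      map_smul' := by
        intro m f
        have hae : ⇑(m • f) =ᵐ[volume] m • ⇑f :=
          (Lp.coeFn_smul m f).filter_mono (JAux.volume_ac ν).ae_le
        have h1 : (fun x => ∫ t in Set.Iic x, (⇑(m • f)) t)
            = m • (fun x => ∫ t in Set.Iic x, ⇑f t) := by
          funext x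
          have h2 := integral_congr_ae (ae_restrict_of_ae hae (s := Set.Iic x))
          simp only [Pi.smul_apply] at h2 ⊢
          rw [h2, integral_smul]
        rw [MemLp.toLp_congr (JAux.memJ hν (m • f)) ((JAux.memJ hν f).const_smul m)
          (Filter.EventuallyEq.of_eq h1), MemLp.toLp_const_smul m (JAux.memJ hν f)]
        rfl }
    with hL_def
  set J : Lp ℂ 2 (wMeasure ν) →L[ℂ] Lp ℂ 2 (wMeasure ν) :=
    L.mkContinuous (1 / ν) (fun f => JAux.norm_toLp_J_le hν f) with hJ_def
  refine ⟨J, fun f => ?_, ?_⟩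
  · have h1 : ⇑(J f) =ᵐ[wMeasure ν] fun x => ∫ t in Set.Iic x, ⇑f t := by
      have : J f = (JAux.memJ hν f).toLp _ := rfl
      rw [this]
      exact MemLp.coeFn_toLp _
    exact h1.filter_mono (JAux.volume_ac ν).ae_le
  · refine le_antisymm (LinearMap.mkContinuous_norm_le L (by positivity) _) ?_
    have key : ∀ a : ℝ, ν < a → 1 / a ≤ ‖J‖ := by
      intro a ha
      have ha0 : (0:ℝ) < a := hν.trans ha
      have haν : (0:ℝ) < a - ν := by linarith
      set c : ℝ := 1 / (2 * (a - ν)) with hc_def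
      have hc : 0 < c := by positivity
      set gL : Lp ℂ 2 (wMeasure ν) := (JAux.memℒp_ga hν ha).toLp _ with hgL
      have hnorm_g : ‖gL‖ = c ^ (1/2:ℝ) := by
        rw [hgL, Lp.norm_toLp _ _,
          JAux.eLpNorm_wMeasure ν (JAux.ga_stronglyMeasurable a).aestronglyMeasurable,
          JAux.nsq_ga hν ha, ← hc_def, ENNReal.ofReal_rpow_of_pos hc,
          ENNReal.toReal_ofReal (Real.rpow_nonneg hc.le _)]
      have hae : ⇑gL =ᵐ[volume] JAux.ga a :=
        (MemLp.coeFn_toLp _).filter_mono (JAux.volume_ac ν).ae_le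
      have hJfun : (fun x => ∫ t in Set.Iic x, ⇑gL t)
          = fun x => ∫ t in Set.Iic x, JAux.ga a t := by
        funext x; exact integral_congr_ae (ae_restrict_of_ae hae)
      have hrpow_eq : ((c / (a * a) : ℝ)) ^ (1/2:ℝ) = c ^ (1/2:ℝ) / a := by
        rw [Real.div_rpow hc.le (by positivity),
          show ((a * a) : ℝ) = a ^ (2:ℝ) by rw [Real.rpow_two, pow_two],
          ← Real.rpow_mul ha0.le]
        norm_num
      have hJnorm : c ^ (1/2:ℝ) / a ≤ ‖J gL‖ := by
        have hJgL : J gL = (JAux.memJ hν gL).toLp _ := rfl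
        have hfinJ : (JAux.nsq ν fun x => ∫ t in Set.Iic x, JAux.ga a t) ≠ ⊤ := by
          have h5 := (JAux.memJ hν gL).2
          rw [JAux.eLpNorm_wMeasure ν (JAux.continuous_J hν (JAux.nsq_vol_aesm gL)
            (JAux.nsq_ne_top gL)).aestronglyMeasurable, hJfun] at h5
          exact ((ENNReal.rpow_lt_top_iff_of_pos (by norm_num)).mp h5).ne
        rw [hJgL, Lp.norm_toLp _ _,
          JAux.eLpNorm_wMeasure ν (JAux.continuous_J hν (JAux.nsq_vol_aesm gL)
            (JAux.nsq_ne_top gL)).aestronglyMeasurable, hJfun]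
        have h3 : (ENNReal.ofReal (c / (a * a))) ^ (1/2:ℝ)
            ≤ (JAux.nsq ν fun x => ∫ t in Set.Iic x, JAux.ga a t) ^ (1/2:ℝ) :=
          ENNReal.rpow_le_rpow (JAux.nsq_J_ga_ge hν ha) (by norm_num)
        have h4 := ENNReal.toReal_mono
          (ENNReal.rpow_ne_top_of_nonneg (by norm_num) hfinJ) h3
        rwa [ENNReal.ofReal_rpow_of_pos (by positivity),
          ENNReal.toReal_ofReal (by positivity), hrpow_eq] at h4
      have hcpos : 0 < c ^ (1/2:ℝ) := Real.rpow_pos_of_pos hc _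
      have h5 : (1 / a) * c ^ (1/2:ℝ) ≤ ‖J‖ * c ^ (1/2:ℝ) := by
        rw [show (1 / a) * c ^ (1/2:ℝ) = c ^ (1/2:ℝ) / a by ring]
        exact hJnorm.trans ((J.le_opNorm gL).trans_eq (by rw [hnorm_g]))
      exact le_of_mul_le_mul_right h5 hcpos
    have hlim : Filter.Tendsto (fun a : ℝ => 1 / a) (nhdsWithin ν (Set.Ioi ν))
        (nhds (1 / ν)) :=
      ((continuousAt_const.div continuousAt_id hν.ne').tendsto).mono_left nhdsWithin_le_nhds
    exact le_of_tendsto hlim (eventually_nhdsWithin_of_forall fun a ha => key a ha)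
end

section
/- Let ν < 0. For φ ∈ H_{ν,0}(ℝ), define (Jφ)(x) = -∫_x^∞ φ(t) dt. Then J is a bounded linear operator on H_{ν,0}(ℝ) with norm 1/|ν|, and for continuously differentiable φ with φ' ∈ H_{ν,0}(ℝ) and appropriate decay, J(φ') = φ. -/
open MeasureTheory Complex

section Helpers
open Real Set ENNReal

lemma expcont {c : ℝ} : Continuous (fun x : ℝ => Real.exp (c * x)) :=
  Real.continuous_exp.comp (continuous_const.mul continuous_id)

lemma expderiv {d : ℝ} (t : ℝ) (hd : d ≠ 0) :
    HasDerivAt (fun t => Real.exp (d * t) / d) (Real.exp (d * t)) t := by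
  simpa [mul_comm, mul_div_assoc, mul_div_cancel_left₀ _ hd] using
    (((hasDerivAt_id t).const_mul d).exp.div_const d)

lemma expInt_integrableOn {d : ℝ} (hd : d < 0) (x : ℝ) :
    IntegrableOn (fun t : ℝ => Real.exp (d * t)) (Ioi x) := by
  have := exp_neg_integrableOn_Ioi x (neg_pos.mpr hd)
  simpa using this

lemma expInt_Ioi {d : ℝ} (hd : d < 0) (x : ℝ) :
    ∫ t in Ioi x, Real.exp (d * t) = Real.exp (d * x) / (-d) := by
  have htend : Filter.Tendsto (fun t => Real.exp (d * t) / d) Filter.atTop (nhds 0) := by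
    have : Filter.Tendsto (fun t => Real.exp (d * t)) Filter.atTop (nhds 0) :=
      Real.tendsto_exp_atBot.comp (Filter.tendsto_id.const_mul_atTop_of_neg hd)
    simpa using this.div_const d
  have := integral_Ioi_of_hasDerivAt_of_tendsto' (fun t _ => expderiv t hd.ne)
    (expInt_integrableOn hd x) htend
  rw [this]; rw [zero_sub, div_neg]

lemma expInt_Iic {c : ℝ} (hc : 0 < c) (t : ℝ) :
    ∫ x in Iic t, Real.exp (c * x) = Real.exp (c * t) / c := by
  have h1 : (∫ x in Iic t, Real.exp (-c * (-x))) = ∫ x in Ioi (-t), Real.exp (-c * x) :=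
    integral_comp_neg_Iic t (fun x => Real.exp (-c * x))
  have h2 := expInt_Ioi (d := -c) (by linarith) (-t)
  simp only [neg_mul, neg_neg, mul_neg] at h1 h2 ⊢
  rw [← h1] at h2; rw [h2]

lemma expInt_integrableOn_Iic {c : ℝ} (hc : 0 < c) (t : ℝ) :
    IntegrableOn (fun x : ℝ => Real.exp (c * x)) (Iic t) := by
  refine integrableOn_Iic_of_intervalIntegral_norm_bounded (Real.exp (c * t) / c) t
    (fun y => (expcont.intervalIntegrable _ _).1)
    Filter.tendsto_id (Filter.Eventually.of_forall fun y => ?_)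
  have key : ∀ y : ℝ, ∫ x in y..t, Real.exp (c * x) = Real.exp (c*t)/c - Real.exp (c*y)/c :=
    fun y => intervalIntegral.integral_eq_sub_of_hasDerivAt (fun x _ => expderiv x hc.ne')
      (expcont.intervalIntegrable _ _)
  have : (∫ x in (id y : ℝ)..t, ‖Real.exp (c * x)‖) = ∫ x in (y : ℝ)..t, Real.exp (c * x) := by
    simp [Real.norm_of_nonneg (Real.exp_pos _).le, Real.norm_eq_abs, abs_of_pos (Real.exp_pos _)]
  rw [this, key]
  have := (Real.exp_pos (c*y)).le
  have := div_nonneg this hc.le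
  linarith


lemma lexpInt_Ioi {d : ℝ} (hd : d < 0) (x : ℝ) :
    ∫⁻ t in Ioi x, ENNReal.ofReal (Real.exp (d * t)) = ENNReal.ofReal (Real.exp (d * x) / (-d)) := by
  have h := ofReal_integral_eq_lintegral_ofReal (expInt_integrableOn hd x)
    (Filter.Eventually.of_forall fun t => (Real.exp_pos _).le)
  rw [expInt_Ioi hd x] at h; exact h.symm

lemma lexpInt_Iic {c : ℝ} (hc : 0 < c) (t : ℝ) :
    ∫⁻ x in Iic t, ENNReal.ofReal (Real.exp (c * x)) = ENNReal.ofReal (Real.exp (c * t) / c) := by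
  have h := ofReal_integral_eq_lintegral_ofReal (expInt_integrableOn_Iic hc t)
    (Filter.Eventually.of_forall fun x => (Real.exp_pos _).le)
  rw [expInt_Iic hc t] at h; exact h.symm

lemma tail_sq' {ν : ℝ} (hν : ν < 0) {f : ℝ → ℂ}
    (hm : AEMeasurable (fun t => (‖f t‖₊ : ℝ≥0∞)) volume) (x : ℝ) :
    (∫⁻ t in Ioi x, (‖f t‖₊ : ℝ≥0∞)) ^ (2:ℝ) ≤
      ENNReal.ofReal (Real.exp (ν * x) / (-ν)) *
        ∫⁻ t in Ioi x, (‖f t‖₊ : ℝ≥0∞) ^ (2:ℝ) * ENNReal.ofReal (Real.exp (-ν * t)) := by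
  have hcont2 : ∀ c : ℝ, Measurable (fun t : ℝ => ENNReal.ofReal (Real.exp (c * t / 2))) :=
    fun c => ENNReal.measurable_ofReal.comp
      (Real.continuous_exp.comp ((continuous_const.mul continuous_id).div_const 2)).measurable
  set φ : ℝ → ℝ≥0∞ := fun t => ENNReal.ofReal (Real.exp (ν * t / 2)) with hφ
  set ψ : ℝ → ℝ≥0∞ := fun t => (‖f t‖₊ : ℝ≥0∞) * ENNReal.ofReal (Real.exp (-ν * t / 2)) with hψ
  have hψm : AEMeasurable ψ (volume.restrict (Ioi x)) :=
    (hm.restrict).mul ((hcont2 (-ν)).aemeasurable)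
  have hpq : (2:ℝ).HolderConjugate 2 := by constructor <;> norm_num
  have key := ENNReal.lintegral_mul_le_Lp_mul_Lq (volume.restrict (Ioi x)) hpq
    (hcont2 ν).aemeasurable hψm
  have e0 : ∫⁻ a in Ioi x, (φ * ψ) a = ∫⁻ t in Ioi x, (‖f t‖₊ : ℝ≥0∞) := by
    refine lintegral_congr fun t => ?_
    simp only [Pi.mul_apply, hφ, hψ]
    rw [← mul_assoc, mul_comm (ENNReal.ofReal _), mul_assoc, ← ENNReal.ofReal_mul
      (Real.exp_pos _).le, ← Real.exp_add]
    rw [show ν * t / 2 + -ν * t / 2 = 0 by ring, Real.exp_zero, ENNReal.ofReal_one, mul_one]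
  have e1 : ∫⁻ a in Ioi x, φ a ^ (2:ℝ) = ∫⁻ t in Ioi x, ENNReal.ofReal (Real.exp (ν * t)) := by
    refine lintegral_congr fun t => ?_
    rw [hφ, ENNReal.ofReal_rpow_of_nonneg (Real.exp_pos _).le (by norm_num : (0:ℝ) ≤ 2),
      ← Real.exp_mul, show ν * t / 2 * 2 = ν * t by ring]
  have e2 : ∫⁻ a in Ioi x, ψ a ^ (2:ℝ)
      = ∫⁻ t in Ioi x, (‖f t‖₊ : ℝ≥0∞) ^ (2:ℝ) * ENNReal.ofReal (Real.exp (-ν * t)) := by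
    refine lintegral_congr fun t => ?_
    rw [hψ, ENNReal.mul_rpow_of_nonneg _ _ (by norm_num : (0:ℝ) ≤ 2),
      ENNReal.ofReal_rpow_of_nonneg (Real.exp_pos _).le (by norm_num : (0:ℝ) ≤ 2),
      ← Real.exp_mul, show -ν * t / 2 * 2 = -ν * t by ring]
  rw [e0, e1, e2] at key
  calc (∫⁻ t in Ioi x, (‖f t‖₊ : ℝ≥0∞)) ^ (2:ℝ)
      ≤ ((∫⁻ t in Ioi x, ENNReal.ofReal (Real.exp (ν * t))) ^ (1/(2:ℝ)) *
         (∫⁻ t in Ioi x, (‖f t‖₊ : ℝ≥0∞) ^ (2:ℝ) * ENNReal.ofReal (Real.exp (-ν * t))) ^ (1/(2:ℝ))) ^ (2:ℝ) :=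
        ENNReal.rpow_le_rpow key (by norm_num)
    _ = ENNReal.ofReal (Real.exp (ν * x) / (-ν)) *
        (∫⁻ t in Ioi x, (‖f t‖₊ : ℝ≥0∞) ^ (2:ℝ) * ENNReal.ofReal (Real.exp (-ν * t))) := by
        rw [ENNReal.mul_rpow_of_nonneg _ _ (by norm_num : (0:ℝ) ≤ 2), ← ENNReal.rpow_mul,
          ← ENNReal.rpow_mul, lexpInt_Ioi hν]
        norm_num


lemma expmeas (c : ℝ) : Measurable (fun t : ℝ => ENNReal.ofReal (Real.exp (c * t))) :=
  ENNReal.measurable_ofReal.comp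
    (Real.continuous_exp.comp (continuous_const.mul continuous_id)).measurable

lemma tonelli {ν : ℝ} (hν : ν < 0) {g : ℝ → ℝ≥0∞} (hg : Measurable g) :
    (∫⁻ x, ENNReal.ofReal (Real.exp (-ν * x)) *
        ∫⁻ t in Ioi x, g t * ENNReal.ofReal (Real.exp (-ν * t)))
      = ENNReal.ofReal (1 / (-ν)) *
          ∫⁻ t, g t * ENNReal.ofReal (Real.exp (-2 * ν * t)) := by
  set F : ℝ × ℝ → ℝ≥0∞ := fun p =>
    ({q : ℝ × ℝ | q.1 < q.2}).indicator
      (fun q => ENNReal.ofReal (Real.exp (-ν * q.1)) * (g q.2 * ENNReal.ofReal (Real.exp (-ν * q.2)))) p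
    with hF
  have hSm : MeasurableSet {q : ℝ × ℝ | q.1 < q.2} := measurableSet_lt measurable_fst measurable_snd
  have hFm : Measurable F := by
    refine Measurable.indicator ?_ hSm
    exact ((expmeas (-ν)).comp measurable_fst).mul
      ((hg.comp measurable_snd).mul ((expmeas (-ν)).comp measurable_snd))
  have hL : ∀ x : ℝ, (ENNReal.ofReal (Real.exp (-ν * x)) *
        ∫⁻ t in Ioi x, g t * ENNReal.ofReal (Real.exp (-ν * t))) = ∫⁻ t, F (x, t) := by
    intro x
    rw [← lintegral_const_mul _ (f := fun t => g t * ENNReal.ofReal (Real.exp (-ν * t))) (hg.mul (expmeas (-ν))),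
      ← lintegral_indicator (measurableSet_Ioi (a := x))]
    refine lintegral_congr fun t => ?_
    simp only [hF, Set.indicator_apply, mem_Ioi, mem_setOf_eq]
  have hR : ∀ t : ℝ, (∫⁻ x, F (x, t)) =
      g t * ENNReal.ofReal (Real.exp (-2 * ν * t)) * ENNReal.ofReal (1 / (-ν)) := by
    intro t
    have : ∀ x : ℝ, F (x, t) = (Iio t).indicator
        (fun x => (g t * ENNReal.ofReal (Real.exp (-ν * t))) * ENNReal.ofReal (Real.exp (-ν * x))) x := by
      intro x
      simp only [hF, Set.indicator_apply, mem_Iio, mem_setOf_eq]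
      by_cases h : x < t <;> simp [h, mul_comm, mul_assoc, mul_left_comm]
    simp_rw [this]
    rw [lintegral_indicator measurableSet_Iio, lintegral_const_mul _ (expmeas (-ν)),
      restrict_Iio_eq_restrict_Iic, lexpInt_Iic (by linarith : (0:ℝ) < -ν) t]
    rw [ENNReal.ofReal_div_of_pos (by linarith), div_eq_mul_inv]
    have : ENNReal.ofReal (Real.exp (-ν*t)) * (ENNReal.ofReal (Real.exp (-ν*t)) * (ENNReal.ofReal (-ν))⁻¹)
        = ENNReal.ofReal (Real.exp (-2*ν*t)) * (1 / ENNReal.ofReal (-ν)) := by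
      rw [← mul_assoc, ← ENNReal.ofReal_mul (Real.exp_pos _).le, ← Real.exp_add,
        show -ν*t + -ν*t = -2*ν*t by ring, one_div]
    rw [mul_assoc, this, ← mul_assoc, ENNReal.ofReal_div_of_pos (by linarith : (0:ℝ) < -ν), ENNReal.ofReal_one]
  calc (∫⁻ x, ENNReal.ofReal (Real.exp (-ν * x)) *
        ∫⁻ t in Ioi x, g t * ENNReal.ofReal (Real.exp (-ν * t)))
      = ∫⁻ x, ∫⁻ t, F (x, t) := by exact lintegral_congr hL
    _ = ∫⁻ t, ∫⁻ x, F (x, t) := lintegral_lintegral_swap hFm.aemeasurable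
    _ = ∫⁻ t, g t * ENNReal.ofReal (Real.exp (-2 * ν * t)) * ENNReal.ofReal (1 / (-ν)) :=
        lintegral_congr hR
    _ = ENNReal.ofReal (1 / (-ν)) * ∫⁻ t, g t * ENNReal.ofReal (Real.exp (-2 * ν * t)) := by
        rw [lintegral_mul_const _ (f := fun t => g t * ENNReal.ofReal (Real.exp (-2 * ν * t))) (hg.mul (expmeas (-2*ν)))]; ring


section JOp
variable {ν : ℝ}




lemma wm_ac : wMeasure ν ≪ volume := withDensity_absolutelyContinuous _ _

lemma vol_ac : (volume : Measure ℝ) ≪ wMeasure ν :=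
  withDensity_absolutelyContinuous' (expmeas (-2*ν)).aemeasurable
    (Filter.Eventually.of_forall fun x => by
      simp [ENNReal.ofReal_eq_zero, not_le, Real.exp_pos])

lemma lint_w (g : ℝ → ℝ≥0∞) :
    ∫⁻ x, g x ∂(wMeasure ν) = ∫⁻ x, ENNReal.ofReal (Real.exp (-2 * ν * x)) * g x := by
  rw [wMeasure, lintegral_withDensity_eq_lintegral_mul_non_measurable _ (expmeas (-2*ν))
    (Filter.Eventually.of_forall fun x => ENNReal.ofReal_lt_top)]
  rfl

lemma eLpNorm_w (f : ℝ → ℂ) :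
    eLpNorm f 2 (wMeasure ν) =
      (∫⁻ x, (‖f x‖₊ : ℝ≥0∞) ^ (2:ℝ) * ENNReal.ofReal (Real.exp (-2 * ν * x))) ^ ((1:ℝ)/2) := by
  rw [eLpNorm_eq_lintegral_rpow_enorm_toReal (by norm_num) (by norm_num), lint_w]
  norm_num
  refine congrArg (fun z => z ^ ((1:ℝ)/2)) (lintegral_congr fun x => ?_)
  rw [mul_comm]
  rfl

lemma I2_lt_top {f : ℝ → ℂ} (hf : MemLp f 2 (wMeasure ν)) :
    ∫⁻ x, (‖f x‖₊ : ℝ≥0∞) ^ (2:ℝ) * ENNReal.ofReal (Real.exp (-2 * ν * x)) < ⊤ := by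
  have h2 := hf.2
  rw [eLpNorm_w] at h2
  by_contra h
  rw [not_lt, top_le_iff] at h
  rw [h] at h2
  simp [ENNReal.top_rpow_of_pos] at h2

lemma tail2_le (hν : ν < 0) {f : ℝ → ℂ} (hsm : AEStronglyMeasurable f volume) (x : ℝ) :
    (∫⁻ t in Ioi x, (‖f t‖₊ : ℝ≥0∞) ^ (2:ℝ) * ENNReal.ofReal (Real.exp (-ν * t)))
      ≤ ENNReal.ofReal (Real.exp (ν * x)) *
          ∫⁻ t, (‖f t‖₊ : ℝ≥0∞) ^ (2:ℝ) * ENNReal.ofReal (Real.exp (-2 * ν * t)) := by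
  calc (∫⁻ t in Ioi x, (‖f t‖₊ : ℝ≥0∞) ^ (2:ℝ) * ENNReal.ofReal (Real.exp (-ν * t)))
      ≤ ∫⁻ t in Ioi x, ENNReal.ofReal (Real.exp (ν * x)) *
          ((‖f t‖₊ : ℝ≥0∞) ^ (2:ℝ) * ENNReal.ofReal (Real.exp (-2 * ν * t))) := by
        refine setLIntegral_mono' measurableSet_Ioi fun t ht => ?_
        rw [← mul_assoc, mul_comm (ENNReal.ofReal _), mul_assoc]
        refine mul_le_mul_right ?_ _
        rw [← ENNReal.ofReal_mul (Real.exp_pos _).le, ← Real.exp_add]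
        exact ENNReal.ofReal_le_ofReal (Real.exp_le_exp.mpr (by nlinarith [le_of_lt (show x < t from ht)]))
    _ ≤ ∫⁻ t, ENNReal.ofReal (Real.exp (ν * x)) *
          ((‖f t‖₊ : ℝ≥0∞) ^ (2:ℝ) * ENNReal.ofReal (Real.exp (-2 * ν * t))) :=
        setLIntegral_le_lintegral _ _
    _ = ENNReal.ofReal (Real.exp (ν * x)) *
          ∫⁻ t, (‖f t‖₊ : ℝ≥0∞) ^ (2:ℝ) * ENNReal.ofReal (Real.exp (-2 * ν * t)) :=
        lintegral_const_mul' _ _ ENNReal.ofReal_ne_top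

lemma tail1_lt_top (hν : ν < 0) {f : ℝ → ℂ} (hsm : AEStronglyMeasurable f volume)
    (hI2 : ∫⁻ x, (‖f x‖₊ : ℝ≥0∞) ^ (2:ℝ) * ENNReal.ofReal (Real.exp (-2 * ν * x)) < ⊤) (x : ℝ) :
    (∫⁻ t in Ioi x, (‖f t‖₊ : ℝ≥0∞)) < ⊤ := by
  have h1 := tail_sq' hν hsm.enorm x
  have h2 := tail2_le hν hsm x
  have h3 : (∫⁻ t in Ioi x, (‖f t‖₊ : ℝ≥0∞)) ^ (2:ℝ) < ⊤ :=
    lt_of_le_of_lt h1 (lt_of_le_of_lt (mul_le_mul_right h2 _)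
      (ENNReal.mul_lt_top ENNReal.ofReal_lt_top
        (ENNReal.mul_lt_top ENNReal.ofReal_lt_top hI2)))
  by_contra h
  rw [not_lt, top_le_iff] at h
  rw [h, ENNReal.top_rpow_of_pos (by norm_num)] at h3
  exact (lt_irrefl _ h3)

lemma integrableOn_Ioi_of (hν : ν < 0) {f : ℝ → ℂ} (hsm : AEStronglyMeasurable f volume)
    (hI2 : ∫⁻ x, (‖f x‖₊ : ℝ≥0∞) ^ (2:ℝ) * ENNReal.ofReal (Real.exp (-2 * ν * x)) < ⊤) (x : ℝ) :
    IntegrableOn f (Ioi x) := by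
  exact ⟨hsm.restrict, tail1_lt_top hν hsm hI2 x⟩




noncomputable def Jfun (f : ℝ → ℂ) : ℝ → ℂ := fun x => -∫ t in Ici x, f t


lemma J_eq {f : ℝ → ℂ} (hInt : ∀ x, IntegrableOn f (Ioi x)) (x : ℝ) :
    Jfun f x = (∫ t in (0:ℝ)..x, f t) - ∫ t in Ioi 0, f t := by
  rw [Jfun, integral_Ici_eq_integral_Ioi]
  rcases le_or_gt 0 x with h | h
  · rw [intervalIntegral.integral_of_le h, ← Ioc_union_Ioi_eq_Ioi h,
      setIntegral_union (Ioc_disjoint_Ioi le_rfl) measurableSet_Ioi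
        ((hInt 0).mono_set Ioc_subset_Ioi_self) (hInt x)]
    abel
  · rw [intervalIntegral.integral_symm, intervalIntegral.integral_of_le h.le,
      ← Ioc_union_Ioi_eq_Ioi h.le,
      setIntegral_union (Ioc_disjoint_Ioi le_rfl) measurableSet_Ioi
        ((hInt x).mono_set Ioc_subset_Ioi_self) (hInt 0)]
    abel

lemma J_cont {f : ℝ → ℂ} (hInt : ∀ x, IntegrableOn f (Ioi x)) : Continuous (Jfun f) := by
  have hprim : Continuous fun x : ℝ => ∫ t in (0:ℝ)..x, f t :=
    intervalIntegral.continuous_primitive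
      (fun a b => ⟨(hInt a).mono_set Ioc_subset_Ioi_self,
        (hInt b).mono_set Ioc_subset_Ioi_self⟩) 0
  have : Jfun f = fun x => (∫ t in (0:ℝ)..x, f t) - ∫ t in Ioi 0, f t := funext (J_eq hInt)
  rw [this]
  exact hprim.sub continuous_const

lemma J_enorm_le {f : ℝ → ℂ} (x : ℝ) :
    (‖Jfun f x‖₊ : ℝ≥0∞) ≤ ∫⁻ t in Ioi x, (‖f t‖₊ : ℝ≥0∞) := by
  rw [Jfun]
  simp only [nnnorm_neg]
  rw [← restrict_Ioi_eq_restrict_Ici]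
  exact enorm_integral_le_lintegral_enorm _

lemma main_bound (hν : ν < 0) {f : ℝ → ℂ} (hsm : StronglyMeasurable f) :
    ∫⁻ x, (‖Jfun f x‖₊ : ℝ≥0∞) ^ (2:ℝ) * ENNReal.ofReal (Real.exp (-2 * ν * x))
      ≤ ENNReal.ofReal (1/(-ν)) * (ENNReal.ofReal (1/(-ν)) *
          ∫⁻ t, (‖f t‖₊ : ℝ≥0∞) ^ (2:ℝ) * ENNReal.ofReal (Real.exp (-2 * ν * t))) := by
  have hpos : (0:ℝ) < -ν := by linarith
  calc ∫⁻ x, (‖Jfun f x‖₊ : ℝ≥0∞) ^ (2:ℝ) * ENNReal.ofReal (Real.exp (-2 * ν * x))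
      ≤ ∫⁻ x, ENNReal.ofReal (1/(-ν)) * (ENNReal.ofReal (Real.exp (-ν * x)) *
          ∫⁻ t in Ioi x, (‖f t‖₊ : ℝ≥0∞) ^ (2:ℝ) * ENNReal.ofReal (Real.exp (-ν * t))) := by
        refine lintegral_mono fun x => ?_
        have h1 : (‖Jfun f x‖₊ : ℝ≥0∞) ^ (2:ℝ) ≤ (∫⁻ t in Ioi x, (‖f t‖₊ : ℝ≥0∞)) ^ (2:ℝ) :=
          ENNReal.rpow_le_rpow (J_enorm_le x) (by norm_num)
        have h2 := (h1.trans (tail_sq' hν hsm.measurable.enorm.aemeasurable x))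
        calc (‖Jfun f x‖₊ : ℝ≥0∞) ^ (2:ℝ) * ENNReal.ofReal (Real.exp (-2 * ν * x))
            ≤ (ENNReal.ofReal (Real.exp (ν * x) / (-ν)) *
                ∫⁻ t in Ioi x, (‖f t‖₊ : ℝ≥0∞) ^ (2:ℝ) * ENNReal.ofReal (Real.exp (-ν * t))) *
              ENNReal.ofReal (Real.exp (-2 * ν * x)) := mul_le_mul_left h2 _
          _ = ENNReal.ofReal (1/(-ν)) * (ENNReal.ofReal (Real.exp (-ν * x)) *
                ∫⁻ t in Ioi x, (‖f t‖₊ : ℝ≥0∞) ^ (2:ℝ) * ENNReal.ofReal (Real.exp (-ν * t))) := by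
              rw [mul_comm _ (ENNReal.ofReal (Real.exp (-2 * ν * x))), ← mul_assoc,
                ← ENNReal.ofReal_mul (Real.exp_pos _).le]
              have : Real.exp (-2 * ν * x) * (Real.exp (ν * x) / (-ν))
                  = (1/(-ν)) * Real.exp (-ν * x) := by
                rw [div_eq_mul_inv, ← mul_assoc, ← Real.exp_add,
                  show (-2*ν*x) + ν*x = -ν*x by ring, one_div, mul_comm]
              rw [this, ENNReal.ofReal_mul (by positivity), mul_assoc]
    _ = ENNReal.ofReal (1/(-ν)) * ∫⁻ x, ENNReal.ofReal (Real.exp (-ν * x)) *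
          ∫⁻ t in Ioi x, (‖f t‖₊ : ℝ≥0∞) ^ (2:ℝ) * ENNReal.ofReal (Real.exp (-ν * t)) :=
        lintegral_const_mul' _ _ ENNReal.ofReal_ne_top
    _ = ENNReal.ofReal (1/(-ν)) * (ENNReal.ofReal (1/(-ν)) *
          ∫⁻ t, (‖f t‖₊ : ℝ≥0∞) ^ (2:ℝ) * ENNReal.ofReal (Real.exp (-2 * ν * t))) := by
        rw [tonelli hν (hsm.measurable.nnnorm.coe_nnreal_ennreal.pow_const (2:ℝ))]

lemma eLpNorm_J_le (hν : ν < 0) {f : ℝ → ℂ} (hsm : StronglyMeasurable f) :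
    eLpNorm (Jfun f) 2 (wMeasure ν) ≤ ENNReal.ofReal (1/(-ν)) * eLpNorm f 2 (wMeasure ν) := by
  have hpos : (0:ℝ) < -ν := by linarith
  rw [eLpNorm_w, eLpNorm_w]
  set C := ENNReal.ofReal (1/(-ν)) with hC
  calc (∫⁻ x, (‖Jfun f x‖₊ : ℝ≥0∞) ^ (2:ℝ) * ENNReal.ofReal (Real.exp (-2 * ν * x))) ^ ((1:ℝ)/2)
      ≤ (C * (C * ∫⁻ t, (‖f t‖₊ : ℝ≥0∞) ^ (2:ℝ) * ENNReal.ofReal (Real.exp (-2 * ν * t)))) ^ ((1:ℝ)/2) :=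
        ENNReal.rpow_le_rpow (main_bound hν hsm) (by norm_num)
    _ = C * (∫⁻ t, (‖f t‖₊ : ℝ≥0∞) ^ (2:ℝ) * ENNReal.ofReal (Real.exp (-2 * ν * t))) ^ ((1:ℝ)/2) := by
        rw [← mul_assoc, ENNReal.mul_rpow_of_nonneg _ _ (by norm_num : (0:ℝ) ≤ 1/2)]
        congr 1
        have h2 : C * C = C ^ (2:ℝ) := by
          rw [show ((2:ℝ)) = ((2:ℕ):ℝ) by norm_num, ENNReal.rpow_natCast, pow_two]
        rw [h2, ← ENNReal.rpow_mul]
        norm_num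

lemma memJ (hν : ν < 0) {f : ℝ → ℂ} (hsm : StronglyMeasurable f)
    (hf : MemLp f 2 (wMeasure ν)) : MemLp (Jfun f) 2 (wMeasure ν) := by
  refine ⟨(J_cont ?_).aestronglyMeasurable, ?_⟩
  · intro x
    exact integrableOn_Ioi_of hν hsm.aestronglyMeasurable (I2_lt_top hf) x
  · exact lt_of_le_of_lt (eLpNorm_J_le hν hsm)
      (ENNReal.mul_lt_top ENNReal.ofReal_lt_top hf.2)


lemma ae_vol_of_ae_w {f g : ℝ → ℂ} (h : f =ᵐ[wMeasure ν] g) : f =ᵐ[volume] g :=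
  h.filter_mono vol_ac.ae_le

lemma ae_w_of_ae_vol {f g : ℝ → ℂ} (h : f =ᵐ[volume] g) : f =ᵐ[wMeasure ν] g :=
  h.filter_mono wm_ac.ae_le

lemma Jfun_congr {f g : ℝ → ℂ} (h : f =ᵐ[volume] g) : Jfun f = Jfun g := by
  funext x
  simp only [Jfun]
  rw [integral_congr_ae (ae_restrict_of_ae h)]

lemma memJ' (hν : ν < 0) {f : ℝ → ℂ} (hf : MemLp f 2 (wMeasure ν)) :
    MemLp (Jfun f) 2 (wMeasure ν) := by
  have sm := hf.aestronglyMeasurable.mono_ac vol_ac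
  have hg : f =ᵐ[volume] sm.mk f := sm.ae_eq_mk
  rw [Jfun_congr hg]
  exact memJ hν sm.stronglyMeasurable_mk (hf.ae_eq (ae_w_of_ae_vol hg))

lemma eLpNorm_J_le' (hν : ν < 0) {f : ℝ → ℂ} (hf : MemLp f 2 (wMeasure ν)) :
    eLpNorm (Jfun f) 2 (wMeasure ν)
      ≤ ENNReal.ofReal (1/(-ν)) * eLpNorm f 2 (wMeasure ν) := by
  have sm := hf.aestronglyMeasurable.mono_ac vol_ac
  have hg : f =ᵐ[volume] sm.mk f := sm.ae_eq_mk
  rw [Jfun_congr hg, eLpNorm_congr_ae (ae_w_of_ae_vol hg)]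
  exact eLpNorm_J_le hν sm.stronglyMeasurable_mk

lemma Jfun_add (hν : ν < 0) {f g : ℝ → ℂ} (hf : MemLp f 2 (wMeasure ν))
    (hg : MemLp g 2 (wMeasure ν)) : Jfun (f + g) = Jfun f + Jfun g := by
  funext x
  have hIf := integrableOn_Ioi_of hν (hf.aestronglyMeasurable.mono_ac vol_ac) (I2_lt_top hf) x
  have hIg := integrableOn_Ioi_of hν (hg.aestronglyMeasurable.mono_ac vol_ac) (I2_lt_top hg) x
  simp only [Jfun, Pi.add_apply]
  rw [integral_Ici_eq_integral_Ioi, integral_Ici_eq_integral_Ioi, integral_Ici_eq_integral_Ioi,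
    integral_add hIf hIg, neg_add]

lemma Jfun_smul (c : ℂ) (f : ℝ → ℂ) : Jfun (c • f) = c • Jfun f := by
  funext x
  simp only [Jfun, Pi.smul_apply]
  rw [integral_smul, smul_neg]

noncomputable def testf (a : ℝ) : ℝ → ℂ :=
  Set.indicator (Ici 0) (fun x => (Real.exp (a * x) : ℂ))

lemma testf_meas (a : ℝ) : AEStronglyMeasurable (testf a) (wMeasure ν) := by
  refine (Measurable.indicator ?_ measurableSet_Ici).aestronglyMeasurable
  exact Complex.measurable_ofReal.comp expcont.measurable

lemma testI2 (hν : ν < 0) {a : ℝ} (ha : a < ν) :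
    ∫⁻ x, (‖testf a x‖₊ : ℝ≥0∞) ^ (2:ℝ) * ENNReal.ofReal (Real.exp (-2 * ν * x))
      = ENNReal.ofReal (1/(2*(ν-a))) := by
  have hpt : ∀ x, (‖testf a x‖₊ : ℝ≥0∞) ^ (2:ℝ) * ENNReal.ofReal (Real.exp (-2 * ν * x))
      = (Ici (0:ℝ)).indicator (fun x => ENNReal.ofReal (Real.exp (2*(a-ν)*x))) x := by
    intro x
    by_cases h : x ∈ Ici (0:ℝ)
    · rw [Set.indicator_of_mem h, testf, Set.indicator_of_mem h]
      rw [← enorm_eq_nnnorm, ← ofReal_norm, Complex.norm_real,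
        Real.norm_of_nonneg (Real.exp_pos _).le,
        ENNReal.ofReal_rpow_of_nonneg (Real.exp_pos _).le (by norm_num : (0:ℝ) ≤ 2),
        ← Real.exp_mul, ← ENNReal.ofReal_mul (Real.exp_pos _).le, ← Real.exp_add]
      ring_nf
    · rw [Set.indicator_of_notMem h, testf, Set.indicator_of_notMem h]
      simp [ENNReal.zero_rpow_of_pos (by norm_num : (0:ℝ) < 2)]
  simp_rw [hpt]
  rw [lintegral_indicator measurableSet_Ici, ← restrict_Ioi_eq_restrict_Ici,
    lexpInt_Ioi (by linarith : 2*(a-ν) < 0) 0, mul_zero, Real.exp_zero,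
    show -(2*(a-ν)) = 2*(ν-a) by ring]

lemma mem_testf (hν : ν < 0) {a : ℝ} (ha : a < ν) : MemLp (testf a) 2 (wMeasure ν) := by
  refine ⟨testf_meas a, ?_⟩
  rw [eLpNorm_w, testI2 hν ha]
  exact ENNReal.rpow_lt_top_of_nonneg (by norm_num) ENNReal.ofReal_ne_top

lemma Jtest_val (hν : ν < 0) {a : ℝ} (ha : a < ν) {x : ℝ} (hx : 0 < x) :
    Jfun (testf a) x = -((Real.exp (a * x) / (-a) : ℝ) : ℂ) := by
  have ha0 : a < 0 := ha.trans hν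
  rw [Jfun, integral_Ici_eq_integral_Ioi]
  have : ∫ t in Ioi x, testf a t = ∫ t in Ioi x, ((Real.exp (a * t) : ℝ) : ℂ) := by
    refine setIntegral_congr_fun measurableSet_Ioi fun t ht => ?_
    exact Set.indicator_of_mem (le_of_lt (hx.trans ht)) _
  have h2 : ∫ t in Ioi x, ((Real.exp (a * t) : ℝ) : ℂ)
      = ((∫ t in Ioi x, Real.exp (a * t) : ℝ) : ℂ) := by
    exact Complex.ofRealCLM.integral_comp_comm (expInt_integrableOn ha0 x)
  rw [this, h2, expInt_Ioi ha0 x]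

lemma sq_rpow_half {b : ℝ} (hb : 0 ≤ b) : ((b^2 : ℝ)) ^ ((1:ℝ)/2) = b := by
  rw [← Real.rpow_natCast b 2, ← Real.rpow_mul hb]
  norm_num

lemma Jtest_lower (hν : ν < 0) {a : ℝ} (ha : a < ν) :
    ENNReal.ofReal (1/(-a)) * ENNReal.ofReal (1/(2*(ν-a))) ^ ((1:ℝ)/2)
      ≤ eLpNorm (Jfun (testf a)) 2 (wMeasure ν) := by
  have ha0 : a < 0 := ha.trans hν
  rw [eLpNorm_w]
  have hbig : ENNReal.ofReal (1/a^2) * ENNReal.ofReal (1/(2*(ν-a)))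
      ≤ ∫⁻ x, (‖Jfun (testf a) x‖₊ : ℝ≥0∞) ^ (2:ℝ) * ENNReal.ofReal (Real.exp (-2 * ν * x)) := by
    have heq : ∫⁻ x in Ioi 0, ENNReal.ofReal (1/a^2) * ENNReal.ofReal (Real.exp (2*(a-ν)*x))
        = ENNReal.ofReal (1/a^2) * ENNReal.ofReal (1/(2*(ν-a))) := by
      rw [lintegral_const_mul' _ _ ENNReal.ofReal_ne_top,
        lexpInt_Ioi (by linarith : 2*(a-ν) < 0) 0, mul_zero, Real.exp_zero,
        show -(2*(a-ν)) = 2*(ν-a) by ring]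
    rw [← heq]
    have hcong : ∫⁻ x in Ioi 0, ENNReal.ofReal (1/a^2) * ENNReal.ofReal (Real.exp (2*(a-ν)*x))
        = ∫⁻ x in Ioi 0, (‖Jfun (testf a) x‖₊ : ℝ≥0∞) ^ (2:ℝ)
            * ENNReal.ofReal (Real.exp (-2 * ν * x)) := by
      refine setLIntegral_congr_fun measurableSet_Ioi (fun x hx => ?_)
      have hra : (0:ℝ) ≤ Real.exp (a*x) / (-a) := div_nonneg (Real.exp_pos _).le (by linarith)
      rw [Jtest_val hν ha hx, ← enorm_eq_nnnorm, ← ofReal_norm, norm_neg, Complex.norm_real,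
        Real.norm_of_nonneg hra,
        ENNReal.ofReal_rpow_of_nonneg hra (by norm_num : (0:ℝ) ≤ 2),
        ← ENNReal.ofReal_mul (Real.rpow_nonneg hra _),
        ← ENNReal.ofReal_mul (by positivity : (0:ℝ) ≤ 1/a^2)]
      congr 1
      rw [div_rpow (Real.exp_pos _).le (by linarith : (0:ℝ) ≤ -a),
        show ((-a : ℝ)) ^ (2:ℝ) = a^2 by
          rw [show ((2:ℝ)) = ((2:ℕ):ℝ) by norm_num, Real.rpow_natCast]; ring,
        ← Real.exp_mul, show (2*(a-ν)*x : ℝ) = a*x*2 + -2*ν*x by ring, Real.exp_add]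
      ring
    rw [hcong]
    exact setLIntegral_le_lintegral _ _
  calc ENNReal.ofReal (1/(-a)) * ENNReal.ofReal (1/(2*(ν-a))) ^ ((1:ℝ)/2)
      = (ENNReal.ofReal (1/a^2) * ENNReal.ofReal (1/(2*(ν-a)))) ^ ((1:ℝ)/2) := by
        rw [ENNReal.mul_rpow_of_nonneg _ _ (by norm_num : (0:ℝ) ≤ 1/2)]
        congr 1
        rw [ENNReal.ofReal_rpow_of_nonneg (by positivity : (0:ℝ) ≤ 1/a^2)
            (by norm_num : (0:ℝ) ≤ 1/2),
          show (1/a^2 : ℝ) = (1/(-a))^2 by field_simp,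
          sq_rpow_half (div_nonneg zero_le_one (by linarith : (0:ℝ) ≤ -a))]
    _ ≤ _ := ENNReal.rpow_le_rpow hbig (by norm_num)

end JOp
end Helpers
/-- For `ν < 0`, the map `(Jφ)(x) = -∫_x^∞ φ(t) dt` is a bounded linear operator
on `H_{ν,0}(ℝ)` with norm `1/|ν|`, and for continuously differentiable `φ` with
`φ, φ' ∈ H_{ν,0}(ℝ)` and decay at `+∞` one has `J(φ') = φ`. -/
theorem integration_operator_neg_nu (ν : ℝ) (hν : ν < 0) :
    ∃ J : Lp ℂ 2 (wMeasure ν) →L[ℂ] Lp ℂ 2 (wMeasure ν),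
      (∀ f : Lp ℂ 2 (wMeasure ν),
        (J f : ℝ → ℂ) =ᵐ[volume] fun x => -∫ t in Set.Ici x, (f : ℝ → ℂ) t) ∧
      ‖J‖ = 1 / |ν| ∧
      ∀ (φ φd : ℝ → ℂ) (hφ : MemLp φ 2 (wMeasure ν)) (hφd : MemLp φd 2 (wMeasure ν)),
        (∀ x, HasDerivAt φ (φd x) x) → Continuous φd →
        Filter.Tendsto φ Filter.atTop (nhds 0) →
        J (hφd.toLp φd) = hφ.toLp φ := by
  classical
  have hc : (0:ℝ) < -ν := by linarith
  let L : Lp ℂ 2 (wMeasure ν) →ₗ[ℂ] Lp ℂ 2 (wMeasure ν) :=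
    { toFun := fun f => (memJ' hν (Lp.memLp f)).toLp (Jfun (f : ℝ → ℂ))
      map_add' := by
        intro f g
        rw [← MemLp.toLp_add]
        refine MemLp.toLp_congr _ _ (Filter.EventuallyEq.of_eq ?_)
        have hco : (↑(f + g) : ℝ → ℂ) =ᵐ[volume] (↑f : ℝ → ℂ) + ↑g :=
          (Lp.coeFn_add f g).filter_mono vol_ac.ae_le
        rw [Jfun_congr hco, Jfun_add hν (Lp.memLp f) (Lp.memLp g)]
      map_smul' := by
        intro c f
        simp only [RingHom.id_apply]
        rw [← MemLp.toLp_const_smul]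
        refine MemLp.toLp_congr _ _ (Filter.EventuallyEq.of_eq ?_)
        have hco : (↑(c • f) : ℝ → ℂ) =ᵐ[volume] c • (↑f : ℝ → ℂ) :=
          (Lp.coeFn_smul c f).filter_mono vol_ac.ae_le
        rw [Jfun_congr hco, Jfun_smul] }
  have hbound : ∀ f : Lp ℂ 2 (wMeasure ν), ‖L f‖ ≤ (1/(-ν)) * ‖f‖ := by
    intro f
    have h1 : ‖L f‖ = (eLpNorm (Jfun (f : ℝ → ℂ)) 2 (wMeasure ν)).toReal := by
      show ‖(memJ' hν (Lp.memLp f)).toLp (Jfun (f : ℝ → ℂ))‖ = _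
      exact Lp.norm_toLp _ _
    have h2 := eLpNorm_J_le' hν (Lp.memLp f)
    rw [h1, Lp.norm_def]
    calc (eLpNorm (Jfun (f : ℝ → ℂ)) 2 (wMeasure ν)).toReal
        ≤ (ENNReal.ofReal (1/(-ν)) * eLpNorm (f : ℝ → ℂ) 2 (wMeasure ν)).toReal :=
          ENNReal.toReal_mono
            (ENNReal.mul_lt_top ENNReal.ofReal_lt_top (Lp.eLpNorm_lt_top f)).ne h2
      _ = (1/(-ν)) * (eLpNorm (f : ℝ → ℂ) 2 (wMeasure ν)).toReal := by
          rw [ENNReal.toReal_mul, ENNReal.toReal_ofReal (div_nonneg zero_le_one hc.le)]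
  let J : Lp ℂ 2 (wMeasure ν) →L[ℂ] Lp ℂ 2 (wMeasure ν) :=
    L.mkContinuous (1/(-ν)) hbound
  have hJae : ∀ f : Lp ℂ 2 (wMeasure ν),
      (J f : ℝ → ℂ) =ᵐ[volume] fun x => -∫ t in Set.Ici x, (f : ℝ → ℂ) t := by
    intro f
    have h0 : J f = (memJ' hν (Lp.memLp f)).toLp (Jfun (f : ℝ → ℂ)) := rfl
    rw [h0]
    exact (MemLp.coeFn_toLp (memJ' hν (Lp.memLp f))).filter_mono vol_ac.ae_le
  refine ⟨J, hJae, ?_, ?_⟩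
  · -- norm
    have habs : |ν| = -ν := abs_of_neg hν
    have hle : ‖J‖ ≤ 1/(-ν) :=
      L.mkContinuous_norm_le (div_nonneg zero_le_one hc.le) hbound
    have hge : ∀ a, a < ν → 1/(-a) ≤ ‖J‖ := by
      intro a ha
      have ha0 : a < 0 := ha.trans hν
      set K : ℝ := 1/(2*(ν-a)) with hK
      have hKpos : 0 < K := by rw [hK]; exact div_pos one_pos (by linarith)
      set F : Lp ℂ 2 (wMeasure ν) := (mem_testf hν ha).toLp (testf a) with hF
      have hFnorm : ‖F‖ = K ^ ((1:ℝ)/2) := by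
        rw [hF, Lp.norm_toLp, eLpNorm_w, testI2 hν ha,
          ENNReal.ofReal_rpow_of_nonneg hKpos.le (by norm_num : (0:ℝ) ≤ 1/2),
          ENNReal.toReal_ofReal (Real.rpow_nonneg hKpos.le _)]
      have hFpos : 0 < ‖F‖ := by
        rw [hFnorm]; exact Real.rpow_pos_of_pos hKpos _
      have hJF : (1/(-a)) * K ^ ((1:ℝ)/2) ≤ ‖J F‖ := by
        have hcoe : (↑(J F) : ℝ → ℂ) =ᵐ[wMeasure ν] Jfun (testf a) := by
          have h0 : J F = (memJ' hν (Lp.memLp F)).toLp (Jfun (↑F : ℝ → ℂ)) := rfl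
          have h1 : (↑(J F) : ℝ → ℂ) =ᵐ[wMeasure ν] Jfun (↑F : ℝ → ℂ) := by
            rw [h0]; exact MemLp.coeFn_toLp (memJ' hν (Lp.memLp F))
          have h2 : (↑F : ℝ → ℂ) =ᵐ[volume] testf a :=
            (MemLp.coeFn_toLp (mem_testf hν ha)).filter_mono vol_ac.ae_le
          rw [show Jfun (↑F : ℝ → ℂ) = Jfun (testf a) from Jfun_congr h2] at h1
          exact h1
        have hnorm : ‖J F‖ = (eLpNorm (Jfun (testf a)) 2 (wMeasure ν)).toReal := by
          rw [Lp.norm_def, eLpNorm_congr_ae hcoe]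
        rw [hnorm]
        have hlow := Jtest_lower hν ha
        have hfin : eLpNorm (Jfun (testf a)) 2 (wMeasure ν) ≠ ⊤ :=
          (memJ' hν (mem_testf hν ha)).2.ne
        have := ENNReal.toReal_mono hfin hlow
        rw [ENNReal.toReal_mul, ENNReal.toReal_ofReal (div_nonneg zero_le_one (by linarith : (0:ℝ) ≤ -a)),
          ENNReal.ofReal_rpow_of_nonneg hKpos.le (by norm_num : (0:ℝ) ≤ 1/2),
          ENNReal.toReal_ofReal (Real.rpow_nonneg hKpos.le _)] at this
        exact this
      have hop := J.le_opNorm F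
      have : (1/(-a)) * K ^ ((1:ℝ)/2) ≤ ‖J‖ * K ^ ((1:ℝ)/2) := by
        calc (1/(-a)) * K ^ ((1:ℝ)/2) ≤ ‖J F‖ := hJF
          _ ≤ ‖J‖ * ‖F‖ := hop
          _ = ‖J‖ * K ^ ((1:ℝ)/2) := by rw [hFnorm]
      exact le_of_mul_le_mul_right this (Real.rpow_pos_of_pos hKpos _)
    have hge' : 1/(-ν) ≤ ‖J‖ := by
      by_contra hlt
      push_neg at hlt
      have hJpos : 0 < ‖J‖ :=
        lt_of_lt_of_le (div_pos one_pos (by linarith : (0:ℝ) < -(ν-1))) (hge (ν-1) (by linarith))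
      have hinv : -ν < 1/‖J‖ := by
        rw [lt_div_iff₀ hJpos]
        calc -ν * ‖J‖ < -ν * (1/(-ν)) := by
              exact mul_lt_mul_of_pos_left hlt hc
          _ = 1 := by rw [mul_one_div_cancel hc.ne']
      obtain ⟨b, hb1, hb2⟩ := exists_between hinv
      have hb0 : 0 < b := lt_trans hc hb1
      have h5 := hge (-b) (by linarith)
      rw [neg_neg] at h5
      have h7 : b * ‖J‖ < 1 := (lt_div_iff₀ hJpos).mp hb2
      rw [mul_comm] at h7
      have h6 : ‖J‖ < 1 / b := (lt_div_iff₀ hb0).mpr h7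
      linarith
    rw [habs]
    linarith
  · -- FTC part
    intro φ φd hφ hφd hderiv hcont htend
    have hInt : ∀ x, IntegrableOn φd (Set.Ioi x) := fun x =>
      integrableOn_Ioi_of hν (hφd.aestronglyMeasurable.mono_ac vol_ac) (I2_lt_top hφd) x
    have hpt : ∀ x, -∫ t in Set.Ici x, φd t = φ x := by
      intro x
      rw [integral_Ici_eq_integral_Ioi,
        integral_Ioi_of_hasDerivAt_of_tendsto (hderiv x).continuousAt.continuousWithinAt
          (fun t _ => hderiv t) (hInt x) htend]
      simp
    have h1 := hJae (hφd.toLp φd)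
    have h2 : (↑(hφd.toLp φd) : ℝ → ℂ) =ᵐ[volume] φd :=
      (MemLp.coeFn_toLp hφd).filter_mono vol_ac.ae_le
    have h3 : (fun x => -∫ t in Set.Ici x, (↑(hφd.toLp φd) : ℝ → ℂ) t)
        = fun x => -∫ t in Set.Ici x, φd t := by
      funext x
      rw [integral_congr_ae (ae_restrict_of_ae h2)]
    have h4 : (↑(J (hφd.toLp φd)) : ℝ → ℂ) =ᵐ[volume] φ := by
      refine h1.trans (Filter.EventuallyEq.of_eq ?_)
      rw [h3]
      exact funext hpt
    refine Lp.ext ?_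
    exact (h4.filter_mono wm_ac.ae_le).trans (MemLp.coeFn_toLp hφ).symm
end

section
/- Let ν > 0, a₀ ≥ 0, and φ ∈ H_{ν,1}(ℝ) (i.e. φ and φ' are in H_{ν,0}(ℝ), with φ continuous). Then Re⟨χ_{(-∞,0]}φ, a₀ φ'⟩_{ν,0} = ν a₀ ∫_{-∞}^0 |φ(t)|² e^{-2νt} dt + (1/2) a₀ |φ(0)|², and in particular this quantity is non-negative. -/
open MeasureTheory Complex

/-- Let `ν > 0`, `a₀ ≥ 0` and `φ ∈ H_{ν,1}(ℝ)` (i.e. `φ` is differentiable with `φ` and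
`φ'` in `H_{ν,0}(ℝ)`).  Then
`Re⟨χ_{(-∞,0]}φ, a₀φ'⟩_{ν,0} = ν a₀ ∫_{-∞}^0 |φ|² e^{-2νt} dt + (a₀/2)|φ(0)|² ≥ 0`. -/
theorem boundary_term_nonneg (ν a₀ : ℝ) (hν : 0 < ν) (ha₀ : 0 ≤ a₀) (φ φd : ℝ → ℂ)
    (hφ : MemLp φ 2 (wMeasure ν)) (hφd : MemLp φd 2 (wMeasure ν))
    (hderiv : ∀ x, HasDerivAt φ (φd x) x) :
    (∫ t in Set.Iic (0 : ℝ),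
        (starRingEnd ℂ) (φ t) * ((a₀ : ℂ) * φd t) * (Real.exp (-2 * ν * t) : ℂ)).re =
      ν * a₀ * (∫ t in Set.Iic (0 : ℝ), ‖φ t‖ ^ 2 * Real.exp (-2 * ν * t)) +
        (1 / 2) * a₀ * ‖φ 0‖ ^ 2 ∧
    0 ≤ (∫ t in Set.Iic (0 : ℝ),
        (starRingEnd ℂ) (φ t) * ((a₀ : ℂ) * φd t) * (Real.exp (-2 * ν * t) : ℂ)).re := by
  classical
  set E : ℝ → ℝ := fun t => Real.exp (-2 * ν * t) with hEdef
  have hEpos : ∀ t, 0 < E t := fun t => Real.exp_pos _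
  have hφc : Continuous φ := by
    rw [continuous_iff_continuousAt]
    exact fun x => (hderiv x).continuousAt
  -- the weight function and its measurability
  have hdmeas : Measurable fun x : ℝ => ENNReal.ofReal (Real.exp (-2 * ν * x)) :=
    (Real.measurable_exp.comp ((measurable_id.const_mul (-2 * ν)))).ennreal_ofReal
  have hdfin : ∀ᵐ x ∂(volume : Measure ℝ),
      ENNReal.ofReal (Real.exp (-2 * ν * x)) < ⊤ :=
    Filter.Eventually.of_forall fun x => ENNReal.ofReal_lt_top
  -- derivative of the weight
  have hE : ∀ t, HasDerivAt E (-2 * ν * E t) t := by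
    intro t
    have h1 : HasDerivAt (fun s : ℝ => -2 * ν * s) (-2 * ν) t := by
      simpa using (hasDerivAt_id t).const_mul (-2 * ν)
    simpa [hEdef, mul_comm] using h1.exp
  -- the two real integrands
  set A : ℝ → ℝ := fun t => ‖φ t‖ ^ 2 * E t with hAdef
  set B : ℝ → ℝ := fun t => ((starRingEnd ℂ) (φ t) * φd t).re * E t with hBdef
  -- A is integrable on ℝ
  have hA : Integrable A (volume : Measure ℝ) := by
    have h2 : Integrable (fun x => ‖φ x‖ ^ 2) (wMeasure ν) :=
      (memLp_two_iff_integrable_sq_norm hφ.1).1 hφ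
    rw [wMeasure, integrable_withDensity_iff hdmeas hdfin] at h2
    refine h2.congr (Filter.Eventually.of_forall fun x => ?_)
    simp [hAdef, hEdef, ENNReal.toReal_ofReal (Real.exp_nonneg _)]
  -- the complex product is integrable on ℝ with the weight
  have hconj : MemLp (fun x => (starRingEnd ℂ) (φ x)) 2 (wMeasure ν) := by
    refine hφ.of_le ((Complex.continuous_conj.comp hφc).aestronglyMeasurable) ?_
    exact Filter.Eventually.of_forall fun x => by simp
  have hCμ : Integrable (fun x => (starRingEnd ℂ) (φ x) * φd x) (wMeasure ν) := by
    have := MemLp.smul (p := 2) (q := 2) (r := 1) hφd hconj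
      (hpqr := ⟨by rw [inv_one]; exact ENNReal.inv_two_add_inv_two⟩)
    rw [← memLp_one_iff_integrable]
    exact this
  have hC : Integrable (fun x => (E x : ℂ) * ((starRingEnd ℂ) (φ x) * φd x))
      (volume : Measure ℝ) := by
    rw [wMeasure, integrable_withDensity_iff_integrable_smul' hdmeas hdfin] at hCμ
    refine hCμ.congr (Filter.Eventually.of_forall fun x => ?_)
    simp [hEdef, ENNReal.toReal_ofReal (Real.exp_nonneg _), Complex.real_smul]
  have hB : Integrable B (volume : Measure ℝ) := by
    have := hC.re
    refine this.congr (Filter.Eventually.of_forall fun x => ?_)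
    simp [hBdef, Complex.mul_re]
    ring
  -- fundamental theorem of calculus: F = A has derivative g = 2B - 2νA
  have hre : ∀ t, HasDerivAt (fun s => (φ s).re) ((φd t).re) t := fun t =>
    Complex.reCLM.hasFDerivAt.comp_hasDerivAt t (hderiv t)
  have him : ∀ t, HasDerivAt (fun s => (φ s).im) ((φd t).im) t := fun t =>
    Complex.imCLM.hasFDerivAt.comp_hasDerivAt t (hderiv t)
  have hN : ∀ t, HasDerivAt (fun s => ‖φ s‖ ^ 2)
      (2 * ((starRingEnd ℂ) (φ t) * φd t).re) t := by
    intro t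
    have h1 := ((hre t).mul (hre t)).add ((him t).mul (him t))
    have heq : (fun s => ‖φ s‖ ^ 2) =
        fun s => (φ s).re * (φ s).re + (φ s).im * (φ s).im := by
      funext s
      rw [Complex.sq_norm, Complex.normSq_apply]
    rw [heq]
    refine h1.congr_deriv ?_
    simp [Complex.mul_re]
    ring
  set g : ℝ → ℝ := fun t => 2 * B t - 2 * ν * A t with hgdef
  have hF : ∀ t, HasDerivAt A (g t) t := by
    intro t
    have h1 := (hN t).mul (hE t)
    refine h1.congr_deriv ?_
    simp [hgdef, hAdef, hBdef]
    ring
  have hg : Integrable g (volume : Measure ℝ) :=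
    (hB.const_mul 2).sub (hA.const_mul (2 * ν))
  -- FTC on intervals
  have key : ∀ a : ℝ, A a = A 0 - ∫ t in a..0, g t := by
    intro a
    have h1 : ∫ t in a..0, g t = A 0 - A a :=
      intervalIntegral.integral_eq_sub_of_hasDerivAt (fun t _ => hF t)
        (hg.intervalIntegrable)
    linarith
  -- limit as a → -∞
  set I : ℝ := ∫ t in Set.Iic (0 : ℝ), g t with hIdef
  have hlim1 : Filter.Tendsto (fun a : ℝ => ∫ t in a..0, g t) Filter.atBot (nhds I) :=
    intervalIntegral_tendsto_integral_Iic 0 hg.integrableOn Filter.tendsto_id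
  have hlimF : Filter.Tendsto A Filter.atBot (nhds (A 0 - I)) := by
    have h2 : Filter.Tendsto (fun a : ℝ => A 0 - ∫ t in a..0, g t) Filter.atBot
        (nhds (A 0 - I)) := tendsto_const_nhds.sub hlim1
    exact h2.congr fun a => (key a).symm
  have hAnonneg : ∀ t, 0 ≤ A t := fun t =>
    mul_nonneg (sq_nonneg _) (Real.exp_nonneg _)
  have hL0 : A 0 - I = 0 := by
    have hge : 0 ≤ A 0 - I :=
      ge_of_tendsto hlimF (Filter.Eventually.of_forall hAnonneg)
    by_contra h
    have hLpos : 0 < A 0 - I := lt_of_le_of_ne hge (Ne.symm h)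
    set L := A 0 - I
    have hev : ∀ᶠ a in Filter.atBot, L / 2 < A a :=
      hlimF.eventually (eventually_gt_nhds (half_lt_self hLpos))
    obtain ⟨a₁, ha₁⟩ := Filter.eventually_atBot.1 hev
    have hsub : Set.Iic a₁ ⊆ {x | L / 2 ≤ A x} := fun x hx => le_of_lt (ha₁ x hx)
    have hfin : volume {x | L / 2 ≤ A x} < ⊤ :=
      hA.measure_ge_lt_top (half_pos hLpos)
    have : (volume (Set.Iic a₁) : ENNReal) < ⊤ :=
      lt_of_le_of_lt (measure_mono hsub) hfin
    rw [Real.volume_Iic] at this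
    exact (lt_irrefl _ this)
  have hI : I = A 0 := by linarith
  -- split the integral
  have hsplit : I = 2 * (∫ t in Set.Iic (0 : ℝ), B t)
      - 2 * ν * (∫ t in Set.Iic (0 : ℝ), A t) := by
    rw [hIdef]
    rw [integral_sub ((hB.const_mul 2).integrableOn) ((hA.const_mul (2 * ν)).integrableOn),
      integral_const_mul, integral_const_mul]
  have hA0 : A 0 = ‖φ 0‖ ^ 2 := by
    simp [hAdef, hEdef]
  have hBint : (∫ t in Set.Iic (0 : ℝ), B t)
      = ν * (∫ t in Set.Iic (0 : ℝ), A t) + (1 / 2) * ‖φ 0‖ ^ 2 := by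
    have := hI
    rw [hsplit, hA0] at this
    linarith
  -- compute the left-hand side
  have hCint : Integrable (fun t => (starRingEnd ℂ) (φ t) * ((a₀ : ℂ) * φd t) * (E t : ℂ))
      (volume : Measure ℝ) := by
    refine (hC.const_mul (a₀ : ℂ)).congr (Filter.Eventually.of_forall fun x => ?_)
    ring
  have hLHS : (∫ t in Set.Iic (0 : ℝ),
      (starRingEnd ℂ) (φ t) * ((a₀ : ℂ) * φd t) * (E t : ℂ)).re
      = a₀ * (∫ t in Set.Iic (0 : ℝ), B t) := by
    have h3 := integral_re (μ := (volume : Measure ℝ).restrict (Set.Iic 0)) hCint.integrableOn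
    simp only [RCLike.re_to_complex] at h3
    rw [← h3, ← integral_const_mul]
    refine setIntegral_congr_fun measurableSet_Iic fun t _ => ?_
    simp [hBdef, Complex.mul_re, Complex.mul_im]
    ring
  constructor
  · rw [hLHS, hBint]
    ring
  · rw [hLHS, hBint]
    have hApos : 0 ≤ ∫ t in Set.Iic (0 : ℝ), A t :=
      setIntegral_nonneg measurableSet_Iic fun t _ => hAnonneg t
    have h9 : (0:ℝ) ≤ 1 / 2 * ‖φ 0‖ ^ 2 :=
      mul_nonneg (by norm_num) (sq_nonneg _)
    nlinarith [mul_nonneg hν.le hApos]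
end

section
/- Let ν > 0 and let B be a bounded linear operator on H_{ν,0}(ℝ) which is causal with operator norm C₁. Then for every φ ∈ H_{ν,0}(ℝ), |Re⟨χ_{(-∞,0]}φ, B ∂₀^{-1} φ⟩_{ν,0}| ≤ C₁ ν^{-1} |χ_{(-∞,0]}φ|²_{ν,0}. -/
open MeasureTheory Complex Real Set Filter

lemma expInt_Iic_s12 {b : ℝ} (hb : 0 < b) (x : ℝ) :
    IntegrableOn (fun t : ℝ => Real.exp (b * t)) (Set.Iic x) := by
  have h := exp_neg_integrableOn_Ioi (-x) hb
  have h2 := (MeasurePreserving.integrableOn_comp_preimage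
      (Measure.measurePreserving_neg (volume : Measure ℝ))
      (Homeomorph.neg ℝ).measurableEmbedding).2 h
  have h3 : IntegrableOn (fun t : ℝ => Real.exp (b * t)) (Set.Iio x) := by
    convert h2 using 1
    · ext t; simp [mul_comm]
    · ext t; simp [Set.mem_Iio, Set.mem_Ioi]
  exact (integrableOn_Iic_iff_integrableOn_Iio (by simp)).2 h3

lemma expIntegral_Iic {b : ℝ} (hb : 0 < b) (x : ℝ) :
    ∫ t in Set.Iic x, Real.exp (b * t) = Real.exp (b * x) / b := by
  have hderiv : ∀ t ∈ Set.Iio x, HasDerivAt (fun t => Real.exp (b * t) / b) (Real.exp (b * t)) t := by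
    intro t _
    have h1 : HasDerivAt (fun t : ℝ => b * t) b t := by
      simpa using (hasDerivAt_id t).const_mul b
    have := (Real.hasDerivAt_exp (b * t)).comp t h1
    have := this.div_const b
    rw [mul_div_assoc, div_self hb.ne', mul_one] at this
    exact this
  have htend : Tendsto (fun t => Real.exp (b * t) / b) atBot (nhds 0) := by
    have : Tendsto (fun t : ℝ => b * t) atBot atBot :=
      tendsto_id.const_mul_atBot hb
    have := (Real.tendsto_exp_atBot.comp this).div_const b
    simpa using this
  have := integral_Iic_of_hasDerivAt_of_tendsto
    (Continuous.continuousWithinAt (by continuity)) hderiv (expInt_Iic_s12 hb x) htend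
  simpa using this

lemma expIntegral_Ioi {b : ℝ} (hb : 0 < b) (t : ℝ) :
    ∫ x in Set.Ioi t, Real.exp (-b * x) = Real.exp (-b * t) / b := by
  have hderiv : ∀ x ∈ Set.Ioi t, HasDerivAt (fun x => -Real.exp (-b * x) / b) (Real.exp (-b * x)) x := by
    intro x _
    have h1 : HasDerivAt (fun x : ℝ => -b * x) (-b) x := by
      simpa using (hasDerivAt_id x).const_mul (-b)
    have := ((Real.hasDerivAt_exp (-b * x)).comp x h1).neg.div_const b
    rw [mul_neg, neg_neg, mul_div_assoc, div_self hb.ne', mul_one] at this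
    exact this
  have htend : Tendsto (fun x => -Real.exp (-b * x) / b) atTop (nhds 0) := by
    have : Tendsto (fun x : ℝ => -b * x) atTop atBot := by
      exact tendsto_id.const_mul_atTop_of_neg (by linarith)
    have := ((Real.tendsto_exp_atBot.comp this).neg).div_const b
    simpa using this
  have := integral_Ioi_of_hasDerivAt_of_tendsto
    (Continuous.continuousWithinAt (by continuity)) hderiv (exp_neg_integrableOn_Ioi t hb) htend
  rw [this]; ring

lemma lexp_Iic {b : ℝ} (hb : 0 < b) (x : ℝ) :
    ∫⁻ t in Set.Iic x, ENNReal.ofReal (Real.exp (b * t)) = ENNReal.ofReal (Real.exp (b * x) / b) := by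
  rw [← ofReal_integral_eq_lintegral_ofReal (expInt_Iic_s12 hb x)
      (Filter.Eventually.of_forall fun t => (Real.exp_pos _).le), expIntegral_Iic hb x]

lemma lexp_Ici {b : ℝ} (hb : 0 < b) (t : ℝ) :
    ∫⁻ x in Set.Ici t, ENNReal.ofReal (Real.exp (-b * x)) = ENNReal.ofReal (Real.exp (-b * t) / b) := by
  rw [← setLIntegral_congr (Ioi_ae_eq_Ici (a := t) (μ := volume)),
    ← ofReal_integral_eq_lintegral_ofReal (exp_neg_integrableOn_Ioi t hb)
      (Filter.Eventually.of_forall fun t => (Real.exp_pos _).le), expIntegral_Ioi hb t]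
lemma cs_step (ν x : ℝ) (U : ℝ → ℂ) (hU : Measurable U) :
    (∫⁻ t in Set.Iic x, (‖U t‖₊ : ENNReal)) ^ 2 ≤
      (∫⁻ t in Set.Iic x, ENNReal.ofReal (Real.exp (ν * t))) *
      (∫⁻ t in Set.Iic x, ENNReal.ofReal (Real.exp (-ν * t)) * (‖U t‖₊ : ENNReal) ^ 2) := by
  set μ' := (volume : Measure ℝ).restrict (Set.Iic x)
  set a : ℝ → ENNReal := fun t => ENNReal.ofReal (Real.exp (ν * t / 2)) with ha
  set b : ℝ → ENNReal := fun t => ENNReal.ofReal (Real.exp (-ν * t / 2)) * (‖U t‖₊ : ENNReal) with hb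
  have hma : AEMeasurable a μ' := ((Real.measurable_exp.comp (by fun_prop)).ennreal_ofReal).aemeasurable
  have hmb : AEMeasurable b μ' :=
    (((Real.measurable_exp.comp (by fun_prop)).ennreal_ofReal).mul hU.enorm).aemeasurable
  have hconj : Real.HolderConjugate 2 2 := Real.HolderConjugate.two_two
  have hcs := ENNReal.lintegral_mul_le_Lp_mul_Lq μ' hconj hma hmb
  have hab : ∀ t, (‖U t‖₊ : ENNReal) = a t * b t := by
    intro t
    rw [ha, hb]; simp only
    rw [← mul_assoc, ← ENNReal.ofReal_mul (Real.exp_nonneg _), ← Real.exp_add]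
    have : ν * t / 2 + -ν * t / 2 = 0 := by ring
    rw [this, Real.exp_zero, ENNReal.ofReal_one, one_mul]
  have hexp2 : ∀ s : ℝ, Real.exp s ^ (2 : ℝ) = Real.exp (2 * s) := by
    intro s
    rw [show (2:ℝ) = ((2:ℕ):ℝ) by norm_num, Real.rpow_natCast, sq, ← Real.exp_add]; ring_nf
  have ha2 : ∀ t, a t ^ (2 : ℝ) = ENNReal.ofReal (Real.exp (ν * t)) := by
    intro t; rw [ha]; simp only
    rw [ENNReal.ofReal_rpow_of_nonneg (Real.exp_nonneg _) (by norm_num : (0:ℝ) ≤ 2), hexp2]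
    ring_nf
  have hb2 : ∀ t, b t ^ (2 : ℝ) = ENNReal.ofReal (Real.exp (-ν * t)) * (‖U t‖₊ : ENNReal) ^ 2 := by
    intro t; rw [hb]; simp only
    rw [ENNReal.mul_rpow_of_nonneg _ _ (by norm_num : (0:ℝ) ≤ 2),
      ENNReal.ofReal_rpow_of_nonneg (Real.exp_nonneg _) (by norm_num : (0:ℝ) ≤ 2), hexp2]
    rw [← ENNReal.rpow_natCast ((‖U t‖₊ : ENNReal)) 2]
    norm_num
    ring_nf
  set X := ∫⁻ t in Set.Iic x, ENNReal.ofReal (Real.exp (ν * t)) with hX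
  set Y := ∫⁻ t in Set.Iic x, ENNReal.ofReal (Real.exp (-ν * t)) * (‖U t‖₊ : ENNReal) ^ 2 with hY
  have h1 : ∫⁻ t in Set.Iic x, (‖U t‖₊ : ENNReal) ∂volume ≤ X ^ (1/2 : ℝ) * Y ^ (1/2 : ℝ) := by
    calc ∫⁻ t in Set.Iic x, (‖U t‖₊ : ENNReal) ∂volume
        = ∫⁻ t, (a * b) t ∂μ' := lintegral_congr fun t => hab t
      _ ≤ (∫⁻ t, a t ^ (2:ℝ) ∂μ') ^ (1/2 : ℝ) * (∫⁻ t, b t ^ (2:ℝ) ∂μ') ^ (1/2 : ℝ) := hcs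
      _ = X ^ (1/2 : ℝ) * Y ^ (1/2 : ℝ) := by
          rw [lintegral_congr ha2, lintegral_congr hb2]
  calc (∫⁻ t in Set.Iic x, (‖U t‖₊ : ENNReal)) ^ 2
      ≤ (X ^ (1/2 : ℝ) * Y ^ (1/2 : ℝ)) ^ 2 := by
        exact pow_le_pow_left₀ (by positivity) h1 2
    _ = X * Y := by
        rw [mul_pow, ← ENNReal.rpow_natCast (X ^ _) 2, ← ENNReal.rpow_natCast (Y ^ _) 2,
          ← ENNReal.rpow_mul, ← ENNReal.rpow_mul]
        norm_num
lemma tonelli_step {ν : ℝ} (hν : 0 < ν) (F : ℝ → ENNReal) (hF : Measurable F)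
    (hFfin : ∀ t, F t ≠ ⊤) :
    ∫⁻ x, ENNReal.ofReal (Real.exp (-ν * x)) * ∫⁻ t in Set.Iic x, F t =
      ∫⁻ t, ENNReal.ofReal (Real.exp (-ν * t) / ν) * F t := by
  set f : ℝ → ℝ → ENNReal :=
    fun x t => ENNReal.ofReal (Real.exp (-ν * x)) * Set.indicator (Set.Iic x) F t with hf
  have key : ∀ x, ENNReal.ofReal (Real.exp (-ν * x)) * ∫⁻ t in Set.Iic x, F t
      = ∫⁻ t, f x t := by
    intro x
    rw [hf]
    simp only
    rw [← lintegral_indicator measurableSet_Iic,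
      ← lintegral_const_mul' _ _ ENNReal.ofReal_ne_top]
  have hunc : Function.uncurry f = fun p : ℝ × ℝ =>
      ENNReal.ofReal (Real.exp (-ν * p.1)) *
        Set.indicator {q : ℝ × ℝ | q.2 ≤ q.1} (fun q => F q.2) p := by
    funext p
    rcases p with ⟨x, t⟩
    by_cases h : t ≤ x <;>
      simp [hf, Function.uncurry, Set.indicator_apply, Set.mem_Iic, h]
  have hG : AEMeasurable (Function.uncurry f) ((volume : Measure ℝ).prod volume) := by
    rw [hunc]
    exact (((Real.measurable_exp.comp (by fun_prop)).comp measurable_fst).ennreal_ofReal.mul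
      ((hF.comp measurable_snd).indicator
        (measurableSet_le measurable_snd measurable_fst))).aemeasurable
  calc ∫⁻ x, ENNReal.ofReal (Real.exp (-ν * x)) * ∫⁻ t in Set.Iic x, F t
      = ∫⁻ x, ∫⁻ t, f x t := lintegral_congr key
    _ = ∫⁻ t, ∫⁻ x, f x t := lintegral_lintegral_swap hG
    _ = ∫⁻ t, ENNReal.ofReal (Real.exp (-ν * t) / ν) * F t := by
        refine lintegral_congr fun t => ?_
        have h1 : ∀ x, f x t =
            Set.indicator (Set.Ici t) (fun x => ENNReal.ofReal (Real.exp (-ν * x)) * F t) x := by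
          intro x
          by_cases h : t ≤ x <;>
            simp [hf, Set.indicator_apply, Set.mem_Iic, Set.mem_Ici, h]
        rw [lintegral_congr h1,
          lintegral_indicator measurableSet_Ici,
          lintegral_mul_const' (F t) _ (hFfin t), lexp_Ici hν t]

lemma hardy (ν : ℝ) (hν : 0 < ν) (u Ju : Lp ℂ 2 (wMeasure ν))
    (hJu : (Ju : ℝ → ℂ) =ᵐ[volume] fun x => ∫ t in Set.Iic x, (u : ℝ → ℂ) t) :
    ‖Ju‖ ≤ ν⁻¹ * ‖u‖ := by
  set d : ℝ → ENNReal := fun x => ENNReal.ofReal (Real.exp (-2 * ν * x)) with hdd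
  have hd : Measurable d := (Real.measurable_exp.comp (by fun_prop)).ennreal_ofReal
  have hvac : (volume : Measure ℝ) ≪ wMeasure ν :=
    withDensity_absolutelyContinuous' hd.aemeasurable
      (Filter.Eventually.of_forall fun x => (ENNReal.ofReal_pos.2 (Real.exp_pos _)).ne')
  have hwac : wMeasure ν ≪ (volume : Measure ℝ) := withDensity_absolutelyContinuous _ _
  have hm : AEStronglyMeasurable (u : ℝ → ℂ) (volume : Measure ℝ) :=
    (Lp.aestronglyMeasurable u).mono_ac hvac
  set U : ℝ → ℂ := hm.mk _ with hUdef
  have hUm : Measurable U := hm.stronglyMeasurable_mk.measurable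
  have huU : (u : ℝ → ℂ) =ᵐ[volume] U := hm.ae_eq_mk
  have huUw : (u : ℝ → ℂ) =ᵐ[wMeasure ν] U := hwac.ae_le huU
  set F : ℝ → ENNReal := fun t => ENNReal.ofReal (Real.exp (-ν * t)) * (‖U t‖₊ : ENNReal) ^ 2
    with hFdef
  have hF : Measurable F :=
    ((Real.measurable_exp.comp (by fun_prop)).ennreal_ofReal).mul (hUm.enorm.pow_const 2)
  have hFfin : ∀ t, F t ≠ ⊤ :=
    fun t => ENNReal.mul_ne_top ENNReal.ofReal_ne_top
      (ENNReal.pow_ne_top ENNReal.coe_ne_top)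
  set A := ∫⁻ x, (‖(Ju : ℝ → ℂ) x‖₊ : ENNReal) ^ 2 ∂(wMeasure ν) with hA
  set Bv := ∫⁻ t, (‖(u : ℝ → ℂ) t‖₊ : ENNReal) ^ 2 ∂(wMeasure ν) with hBv
  have halg : ∀ s r : ℝ, ENNReal.ofReal (Real.exp s) * ENNReal.ofReal (Real.exp r / ν) =
      ENNReal.ofReal ν⁻¹ * ENNReal.ofReal (Real.exp (s + r)) := by
    intro s r
    rw [← ENNReal.ofReal_mul (Real.exp_nonneg _), ← ENNReal.ofReal_mul (inv_nonneg.2 hν.le)]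
    congr 1
    rw [Real.exp_add]
    field_simp
  -- Step N1
  have hN1 : A = ∫⁻ x, d x * (‖(Ju : ℝ → ℂ) x‖₊ : ENNReal) ^ 2 ∂volume := by
    rw [hA]
    exact lintegral_withDensity_eq_lintegral_mul₀' hd.aemeasurable
      ((Lp.aestronglyMeasurable Ju).enorm.pow_const 2)
  -- Step N2: pointwise bound a.e.
  have hN2 : ∀ᵐ x ∂(volume : Measure ℝ), d x * (‖(Ju : ℝ → ℂ) x‖₊ : ENNReal) ^ 2 ≤
      ENNReal.ofReal ν⁻¹ *
        (ENNReal.ofReal (Real.exp (-ν * x)) * ∫⁻ t in Set.Iic x, F t) := by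
    filter_upwards [hJu] with x hx
    have hxU : (‖(Ju : ℝ → ℂ) x‖₊ : ENNReal) = (‖∫ t in Set.Iic x, U t‖₊ : ENNReal) := by
      rw [hx]
      congr 2
      exact integral_congr_ae (ae_restrict_of_ae huU)
    calc d x * (‖(Ju : ℝ → ℂ) x‖₊ : ENNReal) ^ 2
        ≤ d x * (∫⁻ t in Set.Iic x, (‖U t‖₊ : ENNReal)) ^ 2 := by
          gcongr
          rw [hxU]
          exact enorm_integral_le_lintegral_enorm _
      _ ≤ d x * ((∫⁻ t in Set.Iic x, ENNReal.ofReal (Real.exp (ν * t))) *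
            ∫⁻ t in Set.Iic x, F t) := by
          gcongr
          exact cs_step ν x U hUm
      _ = ENNReal.ofReal ν⁻¹ *
            (ENNReal.ofReal (Real.exp (-ν * x)) * ∫⁻ t in Set.Iic x, F t) := by
          rw [lexp_Iic hν x, ← mul_assoc, ← mul_assoc, hdd]
          congr 1
          rw [halg (-2 * ν * x) (ν * x)]
          congr 2
          ring
  -- Steps N3-N6
  have hN6 : Bv = ∫⁻ t, d t * (‖U t‖₊ : ENNReal) ^ 2 ∂volume := by
    have h1 : Bv = ∫⁻ t, (‖U t‖₊ : ENNReal) ^ 2 ∂(wMeasure ν) := by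
      refine lintegral_congr_ae ?_
      filter_upwards [huUw] with t ht
      simp [ht]
    rw [h1]
    exact lintegral_withDensity_eq_lintegral_mul₀' hd.aemeasurable
      ((hUm.enorm.pow_const 2)).aemeasurable
  have hmain : A ≤ ENNReal.ofReal ν⁻¹ * (ENNReal.ofReal ν⁻¹ * Bv) := by
    calc A = ∫⁻ x, d x * (‖(Ju : ℝ → ℂ) x‖₊ : ENNReal) ^ 2 ∂volume := hN1
      _ ≤ ∫⁻ x, ENNReal.ofReal ν⁻¹ *
            (ENNReal.ofReal (Real.exp (-ν * x)) * ∫⁻ t in Set.Iic x, F t) ∂volume :=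
          lintegral_mono_ae hN2
      _ = ENNReal.ofReal ν⁻¹ *
            ∫⁻ x, ENNReal.ofReal (Real.exp (-ν * x)) * ∫⁻ t in Set.Iic x, F t ∂volume :=
          lintegral_const_mul' _ _ ENNReal.ofReal_ne_top
      _ = ENNReal.ofReal ν⁻¹ * ∫⁻ t, ENNReal.ofReal (Real.exp (-ν * t) / ν) * F t ∂volume := by
          rw [tonelli_step hν F hF hFfin]
      _ = ENNReal.ofReal ν⁻¹ * (ENNReal.ofReal ν⁻¹ * Bv) := by
          rw [hN6]
          congr 1
          rw [← lintegral_const_mul' _ _ (ENNReal.ofReal_ne_top (r := ν⁻¹))]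
          refine lintegral_congr fun t => ?_
          rw [hFdef]
          simp only
          rw [← mul_assoc, ← mul_assoc, hdd]
          congr 1
          rw [mul_comm (ENNReal.ofReal (Real.exp (-ν * t) / ν)), halg (-ν * t) (-ν * t)]
          congr 2
          ring
  -- norm conversion
  have hnorm : ∀ (v : Lp ℂ 2 (wMeasure ν)),
      eLpNorm (v : ℝ → ℂ) 2 (wMeasure ν)
        = (∫⁻ x, (‖(v : ℝ → ℂ) x‖₊ : ENNReal) ^ 2 ∂(wMeasure ν)) ^ (1/2 : ℝ) := by
    intro v
    rw [eLpNorm_eq_lintegral_rpow_enorm_toReal (by norm_num) (by norm_num)]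
    norm_num
    rfl
  have hle2 : A ^ (1/2 : ℝ) ≤ ENNReal.ofReal ν⁻¹ * Bv ^ (1/2 : ℝ) := by
    have h1 : A ≤ (ENNReal.ofReal ν⁻¹) ^ 2 * Bv := by
      rw [sq, mul_assoc]; exact hmain
    calc A ^ (1/2 : ℝ) ≤ ((ENNReal.ofReal ν⁻¹) ^ 2 * Bv) ^ (1/2 : ℝ) :=
          ENNReal.rpow_le_rpow h1 (by norm_num)
      _ = ENNReal.ofReal ν⁻¹ * Bv ^ (1/2 : ℝ) := by
          rw [ENNReal.mul_rpow_of_nonneg _ _ (by norm_num)]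
          congr 1
          rw [← ENNReal.rpow_natCast (ENNReal.ofReal ν⁻¹) 2, ← ENNReal.rpow_mul]
          norm_num
  have hBfin : Bv ^ (1/2 : ℝ) ≠ ⊤ := by
    rw [← hnorm u]
    exact Lp.eLpNorm_ne_top u
  rw [Lp.norm_def, Lp.norm_def, hnorm, hnorm]
  calc (A ^ (1/2 : ℝ)).toReal ≤ (ENNReal.ofReal ν⁻¹ * Bv ^ (1/2 : ℝ)).toReal :=
        ENNReal.toReal_mono (ENNReal.mul_ne_top ENNReal.ofReal_ne_top hBfin) hle2
    _ = ν⁻¹ * (Bv ^ (1/2 : ℝ)).toReal := by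
        rw [ENNReal.toReal_mul, ENNReal.toReal_ofReal (inv_nonneg.2 hν.le)]

/-- Let `ν > 0`, `B` a bounded causal operator on `H_{ν,0}(ℝ)` with norm `C₁ = ‖B‖` and
`J = ∂₀⁻¹` the integration operator.  Then for every `φ`,
`|Re⟨χ_{(-∞,0]}φ, B∂₀⁻¹φ⟩_{ν,0}| ≤ C₁ ν⁻¹ |χ_{(-∞,0]}φ|²_{ν,0}`. -/
theorem causal_operator_estimate (ν : ℝ) (hν : 0 < ν)
    (B : Lp ℂ 2 (wMeasure ν) →L[ℂ] Lp ℂ 2 (wMeasure ν))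
    (hBcausal : ∀ (a : ℝ) (f : Lp ℂ 2 (wMeasure ν)),
      (∀ᵐ x ∂(volume : Measure ℝ), x ≤ a → (f : ℝ → ℂ) x = 0) →
      ∀ᵐ x ∂(volume : Measure ℝ), x ≤ a → (B f : ℝ → ℂ) x = 0)
    (J : Lp ℂ 2 (wMeasure ν) →L[ℂ] Lp ℂ 2 (wMeasure ν))
    (hJ : ∀ f : Lp ℂ 2 (wMeasure ν),
      (J f : ℝ → ℂ) =ᵐ[volume] fun x => ∫ t in Set.Iic x, (f : ℝ → ℂ) t) :
    ∀ f g : Lp ℂ 2 (wMeasure ν),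
      ((g : ℝ → ℂ) =ᵐ[volume] Set.indicator (Set.Iic (0 : ℝ)) (f : ℝ → ℂ)) →
      |(inner ℂ g (B (J f)) : ℂ).re| ≤ ‖B‖ * ν⁻¹ * ‖g‖ ^ 2 := by
  intro f g hg
  have hd : Measurable fun x : ℝ => ENNReal.ofReal (Real.exp (-2 * ν * x)) :=
    (Real.measurable_exp.comp (by fun_prop)).ennreal_ofReal
  have hvac : (volume : Measure ℝ) ≪ wMeasure ν :=
    withDensity_absolutelyContinuous' hd.aemeasurable
      (Filter.Eventually.of_forall fun x => (ENNReal.ofReal_pos.2 (Real.exp_pos _)).ne')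
  have hwac : wMeasure ν ≪ (volume : Measure ℝ) := withDensity_absolutelyContinuous _ _
  set h : Lp ℂ 2 (wMeasure ν) := f - g with hh_def
  have hh : (h : ℝ → ℂ) =ᵐ[volume] fun x => (f : ℝ → ℂ) x - (g : ℝ → ℂ) x :=
    hvac.ae_le (Lp.coeFn_sub f g)
  -- h vanishes on Iic 0
  have h0 : ∀ᵐ x ∂(volume : Measure ℝ), x ≤ 0 → (h : ℝ → ℂ) x = 0 := by
    filter_upwards [hh, hg] with x h1 h2
    intro hx0
    rw [h1, h2, Set.indicator_of_mem (Set.mem_Iic.2 hx0)]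
    ring
  -- J h vanishes on Iic 0
  have hJh : ∀ᵐ x ∂(volume : Measure ℝ), x ≤ 0 → (J h : ℝ → ℂ) x = 0 := by
    filter_upwards [hJ h] with x hx
    intro hx0
    rw [hx]
    have h0' : (h : ℝ → ℂ) =ᵐ[(volume : Measure ℝ).restrict (Set.Iic x)] 0 := by
      filter_upwards [ae_restrict_of_ae h0, ae_restrict_mem measurableSet_Iic] with t h1 h2
      exact h1 (le_trans h2 hx0)
    exact integral_eq_zero_of_ae h0'
  -- B (J h) vanishes on Iic 0
  have hBJh := hBcausal 0 (J h) hJh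
  -- split the inner product
  have hfgh : f = g + h := by rw [hh_def]; abel
  have hsplit : B (J f) = B (J g) + B (J h) := by rw [hfgh, map_add, map_add]
  have hzero : (inner ℂ g (B (J h)) : ℂ) = 0 := by
    rw [MeasureTheory.L2.inner_def]
    refine integral_eq_zero_of_ae ?_
    have hg' := hwac.ae_le hg
    have hBJh' := hwac.ae_le hBJh
    filter_upwards [hg', hBJh'] with x h1 h2
    by_cases hx : x ≤ 0
    · simp [h2 hx]
    · simp [h1, Set.indicator_of_notMem (by simpa using hx : x ∉ Set.Iic (0:ℝ))]
  have hinner : (inner ℂ g (B (J f)) : ℂ) = inner ℂ g (B (J g)) := by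
    rw [hsplit, inner_add_right, hzero, add_zero]
  -- final estimate
  have hJg : ‖J g‖ ≤ ν⁻¹ * ‖g‖ := hardy ν hν g (J g) (hJ g)
  have h1 : |(inner ℂ g (B (J g)) : ℂ).re| ≤ ‖(inner ℂ g (B (J g)) : ℂ)‖ := Complex.abs_re_le_norm _
  have h2 : ‖(inner ℂ g (B (J g)) : ℂ)‖ ≤ ‖g‖ * ‖B (J g)‖ := norm_inner_le_norm _ _
  have h3 : ‖B (J g)‖ ≤ ‖B‖ * ‖J g‖ := B.le_opNorm _
  have hg0 : (0:ℝ) ≤ ‖g‖ := norm_nonneg _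
  have hB0 : (0:ℝ) ≤ ‖B‖ := norm_nonneg _
  have hν0 : (0:ℝ) ≤ ν⁻¹ := inv_nonneg.2 hν.le
  rw [hinner]
  calc |(inner ℂ g (B (J g)) : ℂ).re| ≤ ‖g‖ * ‖B (J g)‖ := h1.trans h2
    _ ≤ ‖g‖ * (‖B‖ * ‖J g‖) := mul_le_mul_of_nonneg_left h3 hg0
    _ ≤ ‖g‖ * (‖B‖ * (ν⁻¹ * ‖g‖)) := by
        have := mul_le_mul_of_nonneg_left hJg hB0
        exact mul_le_mul_of_nonneg_left this hg0
    _ = ‖B‖ * ν⁻¹ * ‖g‖ ^ 2 := by ring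
end

section
/- Let H be a complex Hilbert space and A a densely defined closed linear operator on H such that Re⟨u, Au⟩ ≥ 0 for all u ∈ D(A) and Re⟨v, A*v⟩ ≥ 0 for all v ∈ D(A*). Let B ∈ L(H) satisfy Re⟨u, Bu⟩ ≥ c₀|u|² for all u ∈ H with c₀ > 0. Then B + A (with domain D(A)) is continuously invertible, with ‖(B+A)^{-1}‖ ≤ 1/c₀. -/
open Complex

/-- Let `H` be a complex Hilbert space and `A` a densely defined closed operator on `H`
with `Re⟨u, Au⟩ ≥ 0` on `D(A)` and `Re⟨v, A*v⟩ ≥ 0` on `D(A*)`.  Let `B` be bounded with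
`Re⟨u, Bu⟩ ≥ c₀‖u‖²`, `c₀ > 0`.  Then `B + A` (with domain `D(A)`) is continuously
invertible with `‖(B+A)⁻¹‖ ≤ 1/c₀`. -/
theorem accretive_plus_coercive_invertible {H : Type*} [NormedAddCommGroup H]
    [InnerProductSpace ℂ H] [CompleteSpace H]
    (A : H →ₗ.[ℂ] H) (hAdense : Dense (A.domain : Set H)) (hAclosed : A.IsClosed)
    (hAacc : ∀ u : A.domain, 0 ≤ (inner ℂ (u : H) (A u) : ℂ).re)
    (hAadacc : ∀ v : A.adjoint.domain, 0 ≤ (inner ℂ (v : H) (A.adjoint v) : ℂ).re)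
    (B : H →L[ℂ] H) (c₀ : ℝ) (hc₀ : 0 < c₀)
    (hB : ∀ u : H, c₀ * ‖u‖ ^ 2 ≤ (inner ℂ u (B u) : ℂ).re) :
    ∀ g : H, ∃ u : A.domain, B (u : H) + A u = g ∧ ‖(u : H)‖ ≤ (1 / c₀) * ‖g‖ ∧
      ∀ v : A.domain, B (v : H) + A v = g → v = u := by
  classical
  -- the operator `B + A` as a linear map on the domain of `A`
  set S : A.domain →ₗ[ℂ] H :=
    (B.toLinearMap.comp A.domain.subtype) + A.toFun with hS
  have hSapp : ∀ u : A.domain, S u = B (u : H) + A u := fun u => rfl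
  -- key coercive estimate
  have key : ∀ u : A.domain, c₀ * ‖(u : H)‖ ≤ ‖S u‖ := by
    intro u
    rcases eq_or_ne (u : H) 0 with h0 | h0
    · have hu0 : u = 0 := Subtype.ext h0
      simp [hu0]
    · have h1 : c₀ * ‖(u : H)‖ ^ 2 ≤ (inner ℂ (u : H) (S u) : ℂ).re := by
        rw [hSapp, inner_add_right]
        have h2 := hAacc u
        have h3 := hB (u : H)
        simp only [Complex.add_re]
        linarith
      have h2 : (inner ℂ (u : H) (S u) : ℂ).re ≤ ‖(u : H)‖ * ‖S u‖ := by
        refine le_trans (Complex.re_le_norm _) ?_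
        exact norm_inner_le_norm _ _
      have hpos : 0 < ‖(u : H)‖ := norm_pos_iff.mpr h0
      nlinarith
  -- the range of `S` is dense
  set R : Submodule ℂ H := LinearMap.range S with hR
  have horth : Rᗮ = ⊥ := by
    rw [Submodule.eq_bot_iff]
    intro w hw
    rw [Submodule.mem_orthogonal] at hw
    have hinner : ∀ x : A.domain, (inner ℂ (-(ContinuousLinearMap.adjoint B w)) (x : H) : ℂ)
        = inner ℂ w (A x) := by
      intro x
      have hx := hw (S x) (LinearMap.mem_range_self S x)
      rw [hSapp, inner_add_left] at hx
      have hAx : (inner ℂ ((A x : H)) w : ℂ) = - inner ℂ (B (x : H)) w := by linear_combination hx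
      calc (inner ℂ (-(ContinuousLinearMap.adjoint B w)) (x : H) : ℂ)
          = - inner ℂ (ContinuousLinearMap.adjoint B w) (x : H) := by rw [inner_neg_left]
        _ = - inner ℂ w (B (x : H)) := by rw [ContinuousLinearMap.adjoint_inner_left]
        _ = - (starRingEnd ℂ) (inner ℂ (B (x : H)) w) := by rw [inner_conj_symm]
        _ = (starRingEnd ℂ) (inner ℂ ((A x : H)) w) := by rw [hAx]; simp
        _ = inner ℂ w (A x) := by rw [inner_conj_symm]
    have hmem : w ∈ A.adjoint.domain :=
      LinearPMap.mem_adjoint_domain_of_exists w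
        ⟨-(ContinuousLinearMap.adjoint B w), hinner⟩
    have hval : A.adjoint ⟨w, hmem⟩ = -(ContinuousLinearMap.adjoint B w) :=
      LinearPMap.adjoint_apply_eq hAdense _ hinner
    have h1 := hAadacc ⟨w, hmem⟩
    rw [hval] at h1
    have h2 : (inner ℂ w (-(ContinuousLinearMap.adjoint B w)) : ℂ).re
        = -(inner ℂ w (B w) : ℂ).re := by
      have hc : (inner ℂ w (ContinuousLinearMap.adjoint B w) : ℂ)
          = (starRingEnd ℂ) (inner ℂ w (B w)) := by
        rw [← inner_conj_symm, ContinuousLinearMap.adjoint_inner_left]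
      rw [inner_neg_right, hc]
      simp only [Complex.neg_re, Complex.conj_re]
    rw [h2] at h1
    have h3 := hB w
    have h4 : c₀ * ‖w‖ ^ 2 ≤ c₀ * 0 := by simpa using (by linarith : c₀ * ‖w‖ ^ 2 ≤ (0:ℝ))
    have h5 : ‖w‖ ^ 2 ≤ 0 := le_of_mul_le_mul_left h4 hc₀
    have h6 : ‖w‖ ≤ 0 := by nlinarith [norm_nonneg w]
    exact norm_le_zero_iff.mp h6
  have hclosure : R.topologicalClosure = ⊤ := Submodule.topologicalClosure_eq_top_iff.mpr horth
  -- main argument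
  intro g
  have hg : g ∈ closure (R : Set H) := by
    have : g ∈ R.topologicalClosure := by rw [hclosure]; trivial
    exact this
  obtain ⟨gs, hgs_mem, hgs_lim⟩ := mem_closure_iff_seq_limit.mp hg
  choose us hus using fun n => LinearMap.mem_range.mp (hgs_mem n)
  -- the preimages form a Cauchy sequence
  have hcauchy : CauchySeq (fun n => (us n : H)) := by
    rw [Metric.cauchySeq_iff]
    intro ε hε
    obtain ⟨N, hN⟩ := Metric.cauchySeq_iff.mp hgs_lim.cauchySeq (c₀ * ε) (by positivity)
    refine ⟨N, fun m hm n hn => ?_⟩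
    have h1 := key (us m - us n)
    have h2 : S (us m - us n) = gs m - gs n := by rw [map_sub, hus, hus]
    rw [h2] at h1
    have h3 := hN m hm n hn
    rw [dist_eq_norm] at h3 ⊢
    have h4 : ((us m - us n : A.domain) : H) = (us m : H) - (us n : H) := rfl
    rw [h4] at h1
    nlinarith
  obtain ⟨l, hl⟩ := cauchySeq_tendsto_of_complete hcauchy
  -- use closedness of the graph of `A`
  have hgraph : ∀ n, (((us n : H), gs n - B (us n : H)) : H × H) ∈ A.graph := by
    intro n
    have h1 : A (us n) = gs n - B (us n : H) := by
      rw [← hus n, hSapp]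
      abel
    rw [← h1]
    exact A.mem_graph (us n)
  have htend : Filter.Tendsto (fun n => (((us n : H), gs n - B (us n : H)) : H × H))
      Filter.atTop (nhds (l, g - B l)) := by
    refine Filter.Tendsto.prodMk_nhds hl ?_
    exact hgs_lim.sub (((B.continuous.tendsto l).comp hl))
  have hlim_mem : ((l, g - B l) : H × H) ∈ A.graph :=
    hAclosed.mem_of_tendsto htend (Filter.Eventually.of_forall hgraph)
  obtain ⟨u, hu1, hu2⟩ := A.mem_graph_iff.mp hlim_mem
  have h2 : S u = g := by rw [hSapp, hu2, hu1]; simp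
  refine ⟨u, ?_, ?_, ?_⟩
  · have := h2; rwa [hSapp] at this
  · have h1 := key u
    rw [h2] at h1
    rw [one_div_mul_eq_div]
    refine (le_div_iff₀ hc₀).mpr ?_
    nlinarith
  · intro v hv
    have h3 : S (v - u) = 0 := by rw [map_sub, h2, hSapp, hv, sub_self]
    have h4 := key (v - u)
    rw [h3, norm_zero] at h4
    have h5 : ((v - u : A.domain) : H) = (v : H) - (u : H) := rfl
    rw [h5] at h4
    have h6 : ‖(v : H) - (u : H)‖ = 0 := le_antisymm (by nlinarith) (norm_nonneg _)
    exact Subtype.ext (sub_eq_zero.mp (norm_eq_zero.mp h6))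
end

section
/- Let ν > 0, r > 1/(2ν), and M: B_ℂ(r,r) → L(H,H) bounded and analytic on the open disc of radius r centred at r, where H is a Hilbert space. Then the operator M(∂₀^{-1}) := L_ν* M(1/(im+ν)) L_ν is a bounded linear operator on H_{ν,0}(ℝ, H) with norm at most sup_{z ∈ B_ℂ(r,r)} ‖M(z)‖. -/
open MeasureTheory Complex

lemma inv_mem_ball {ν r : ℝ} (hν : 0 < ν) (hr : 1 / (2 * ν) < r) (t : ℝ) :
    ((Complex.I * t + ν)⁻¹ : ℂ) ∈ Metric.ball (r : ℂ) r := by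
  have hr0 : 0 < r := lt_trans (by positivity) hr
  have h2 : 1 < 2 * ν * r := by
    rw [div_lt_iff₀ (by positivity)] at hr
    linarith [hr]
  set w : ℂ := Complex.I * t + ν with hw
  have hre : w.re = ν := by simp [hw]
  have him : w.im = t := by simp [hw]
  have hS : Complex.normSq w = ν ^ 2 + t ^ 2 := by
    rw [Complex.normSq_apply, hre, him]; ring
  have hSpos : 0 < Complex.normSq w := by rw [hS]; positivity
  have hzre : (w⁻¹).re = ν / (ν ^ 2 + t ^ 2) := by
    rw [Complex.inv_re, hre, hS]
  have hzim : (w⁻¹).im = -t / (ν ^ 2 + t ^ 2) := by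
    rw [Complex.inv_im, him, hS]
  rw [Metric.mem_ball, Complex.dist_eq]
  have hsq : Complex.normSq (w⁻¹ - (r : ℂ)) < r ^ 2 := by
    rw [Complex.normSq_apply]
    simp only [Complex.sub_re, Complex.sub_im, Complex.ofReal_re, Complex.ofReal_im, hzre, hzim]
    have hS' : (0:ℝ) < ν ^ 2 + t ^ 2 := by positivity
    rw [div_sub' (ne_of_gt hS'), sub_zero, div_mul_div_comm, div_mul_div_comm,
      ← add_div, div_lt_iff₀ (by positivity)]
    nlinarith [mul_pos hS' hS', mul_lt_mul_of_pos_left h2 hS', hS']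
  rw [Complex.norm_def]
  calc Real.sqrt (Complex.normSq (w⁻¹ - (r:ℂ))) < Real.sqrt (r ^ 2) :=
        Real.sqrt_lt_sqrt (Complex.normSq_nonneg _) hsq
  _ = r := Real.sqrt_sq hr0.le

/-- Let `ν > 0`, `r > 1/(2ν)` and `M : B_ℂ(r,r) → L(H,H)` bounded (by `C`) and analytic.
With `L` the (`H`-valued) unitary Fourier-Laplace transform, the material law operator
`M(∂₀⁻¹) = L* M(1/(im+ν)) L` is a bounded linear operator on `H_{ν,0}(ℝ,H)` with norm at
most `sup_{z ∈ B_ℂ(r,r)} ‖M(z)‖`. -/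
theorem material_law_operator_bounded {H : Type*} [NormedAddCommGroup H]
    [InnerProductSpace ℂ H] [CompleteSpace H]
    (ν r C : ℝ) (hν : 0 < ν) (hr : 1 / (2 * ν) < r)
    (M : ℂ → (H →L[ℂ] H))
    (hMan : DifferentiableOn ℂ M (Metric.ball (r : ℂ) r))
    (hMbd : ∀ z ∈ Metric.ball (r : ℂ) r, ‖M z‖ ≤ C)
    (L : Lp H 2 (wMeasure ν) ≃ₗᵢ[ℂ] Lp H 2 (volume : Measure ℝ)) :
    ∃ Mop : Lp H 2 (wMeasure ν) →L[ℂ] Lp H 2 (wMeasure ν),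
      (∀ f : Lp H 2 (wMeasure ν),
        (L (Mop f) : ℝ → H) =ᵐ[volume]
          fun t => M ((Complex.I * t + ν)⁻¹) ((L f : ℝ → H) t)) ∧
      ‖Mop‖ ≤ C := by
  have hr0 : 0 < r := lt_trans (by positivity) hr
  have hC : 0 ≤ C := by
    have : (r : ℂ) ∈ Metric.ball (r : ℂ) r := Metric.mem_ball_self hr0
    exact (norm_nonneg _).trans (hMbd _ this)
  -- the symbol
  set z : ℝ → ℂ := fun t => (Complex.I * t + ν)⁻¹ with hz
  have hzball : ∀ t, z t ∈ Metric.ball (r : ℂ) r := inv_mem_ball hν hr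
  have hzcont : Continuous z := by
    apply Continuous.inv₀
    · continuity
    · intro t
      intro h
      have : ((Complex.I * t + ν) : ℂ).re = ν := by simp
      rw [h] at this
      simp at this
      exact (ne_of_gt hν) this.symm
  have hTcont : Continuous fun t => M (z t) :=
    hMan.continuousOn.comp_continuous hzcont hzball
  have hTbd : ∀ t, ‖M (z t)‖ ≤ C := fun t => hMbd _ (hzball t)
  -- pointwise multiplication as a function
  set g : Lp H 2 (volume : Measure ℝ) → ℝ → H :=
    fun φ t => M (z t) ((φ : ℝ → H) t) with hg
  have hgm : ∀ φ : Lp H 2 (volume : Measure ℝ), AEStronglyMeasurable (g φ) volume := by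
    intro φ
    set_option synthInstance.maxHeartbeats 1000000 in
    exact isBoundedBilinearMap_apply.continuous.comp_aestronglyMeasurable
      (hTcont.aestronglyMeasurable.prodMk (Lp.aestronglyMeasurable φ))
  have hgle : ∀ (φ : Lp H 2 (volume : Measure ℝ)) (t : ℝ), ‖g φ t‖ ≤ C * ‖(φ : ℝ → H) t‖ := by
    intro φ t
    exact ((M (z t)).le_opNorm _).trans
      (mul_le_mul_of_nonneg_right (hTbd t) (norm_nonneg _))
  have hgmem : ∀ φ : Lp H 2 (volume : Measure ℝ), MemLp (g φ) 2 volume := by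
    intro φ
    exact (Lp.memLp φ).of_le_mul (hgm φ) (Filter.Eventually.of_forall (hgle φ))
  -- multiplication operator on L²(ℝ)
  set T₀ : Lp H 2 (volume : Measure ℝ) →ₗ[ℂ] Lp H 2 (volume : Measure ℝ) :=
    { toFun := fun φ => (hgmem φ).toLp (g φ)
      map_add' := by
        intro φ ψ
        apply Lp.ext
        filter_upwards [(hgmem (φ + ψ)).coeFn_toLp, (hgmem φ).coeFn_toLp,
          (hgmem ψ).coeFn_toLp, Lp.coeFn_add ((hgmem φ).toLp (g φ)) ((hgmem ψ).toLp (g ψ)),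
          Lp.coeFn_add φ ψ] with t h1 h2 h3 h4 h5
        rw [h1, h4]
        simp only [Pi.add_apply, h2, h3]; simp only [hg, h5]
        exact map_add _ _ _
      map_smul' := by
        intro c φ
        simp only [RingHom.id_apply]
        apply Lp.ext
        filter_upwards [(hgmem (c • φ)).coeFn_toLp, (hgmem φ).coeFn_toLp,
          Lp.coeFn_smul c ((hgmem φ).toLp (g φ)), Lp.coeFn_smul c φ] with t h1 h2 h3 h4
        rw [h1, h3]
        simp only [Pi.smul_apply, h2]; simp only [hg, h4]
        exact map_smul _ _ _ } with hT₀
  have hT₀bd : ∀ φ, ‖T₀ φ‖ ≤ C * ‖φ‖ := by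
    intro φ
    rw [hT₀]
    simp only [LinearMap.coe_mk, AddHom.coe_mk]
    rw [Lp.norm_toLp]
    have h1 : eLpNorm (g φ) 2 volume ≤ ENNReal.ofReal C * eLpNorm (φ : ℝ → H) 2 volume :=
      eLpNorm_le_mul_eLpNorm_of_ae_le_mul (Filter.Eventually.of_forall (hgle φ)) 2
    have h2 : (eLpNorm (g φ) 2 volume).toReal ≤
        (ENNReal.ofReal C * eLpNorm (φ : ℝ → H) 2 volume).toReal := by
      refine ENNReal.toReal_mono ?_ h1
      exact ENNReal.mul_ne_top ENNReal.ofReal_ne_top (Lp.memLp φ).2.ne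
    refine h2.trans ?_
    rw [ENNReal.toReal_mul, ENNReal.toReal_ofReal hC]
    exact le_of_eq (by rw [Lp.norm_def])
  set T : Lp H 2 (volume : Measure ℝ) →L[ℂ] Lp H 2 (volume : Measure ℝ) :=
    T₀.mkContinuous C hT₀bd with hT
  refine ⟨((L.symm.toLinearIsometry.toContinuousLinearMap).comp T).comp
      L.toLinearIsometry.toContinuousLinearMap, ?_, ?_⟩
  · intro f
    have hLL : L ((L.symm.toLinearIsometry.toContinuousLinearMap.comp T).comp
        L.toLinearIsometry.toContinuousLinearMap f) = T (L f) := by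
      simp [LinearIsometryEquiv.coe_toLinearIsometry]
    rw [hLL]
    have : T (L f) = (hgmem (L f)).toLp (g (L f)) := rfl
    rw [this]
    exact (hgmem (L f)).coeFn_toLp
  · refine ContinuousLinearMap.opNorm_le_bound _ hC ?_
    intro f
    have e1 : (((L.symm.toLinearIsometry.toContinuousLinearMap).comp T).comp
        L.toLinearIsometry.toContinuousLinearMap) f = L.symm (T (L f)) := rfl
    rw [e1, L.symm.norm_map]
    have e2 : ‖T (L f)‖ = ‖T₀ (L f)‖ := rfl
    rw [e2]
    calc ‖T₀ (L f)‖ ≤ C * ‖L f‖ := hT₀bd (L f)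
    _ = C * ‖f‖ := by rw [L.norm_map]
end
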